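/- arXiv:2009.01064 — 4 statements merged into one kernel-verified Lean document; each statement's English description precedes it below -/
import Mathlib

section
/- Let B be a Banach *-algebra, I a (not necessarily closed) two-sided *-ideal of B, and π : I → B(H) a *-homomorphism into the bounded operators on a Hilbert space (or more generally the adjointable operators on a Hilbert C*-module). Then π is contractive with respect to the norm on I inherited from B; that is, ‖π(a)‖ ≤ ‖a‖ for all a ∈ I. -/
lemma sqrt_lemma {B : Type} [NonUnitalNormedRing B] [StarRing B] [NormedStarGroup B]
    [CompleteSpace B] [NormedSpace ℂ B] [IsScalarTower ℂ B B] [SMulCommClass ℂ B B]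
    [StarModule ℂ B] (d : B) (hd : star d = d) (hdn : ‖d‖ < 1) :
    ∃ y : B, star y = y ∧ y + y - y * y = d := by
  set t : ℝ := 1 - Real.sqrt (1 - ‖d‖) with ht
  have hs0 : 0 < Real.sqrt (1 - ‖d‖) := Real.sqrt_pos.2 (by linarith)
  have hs1 : Real.sqrt (1 - ‖d‖) ≤ 1 := by
    rw [show (1:ℝ) = Real.sqrt 1 by simp]
    exact Real.sqrt_le_sqrt (by simpa using norm_nonneg d)
  have hssq : Real.sqrt (1 - ‖d‖) ^ 2 = 1 - ‖d‖ := Real.sq_sqrt (by linarith)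
  have ht0 : 0 ≤ t := by simp only [ht]; linarith
  have ht1 : t < 1 := by simp only [ht]; linarith
  have htid : ‖d‖ + t * t = 2 * t := by nlinarith [hssq]
  set S : Set B := {z : B | ‖z‖ ≤ t ∧ star z = z} with hS
  have hSclosed : IsClosed S := by
    apply IsClosed.inter
    · exact isClosed_le continuous_norm continuous_const
    · exact isClosed_eq continuous_star continuous_id
  haveI : CompleteSpace S := hSclosed.completeSpace_coe
  haveI : Nonempty S := ⟨⟨0, by simp [hS, ht0]⟩⟩
  have hmem : ∀ z : S, (2⁻¹:ℂ) • (d + (z:B) * (z:B)) ∈ S := by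
    rintro ⟨z, hz1, hz2⟩
    constructor
    · calc ‖(2⁻¹:ℂ) • (d + z * z)‖ = 2⁻¹ * ‖d + z * z‖ := by
            rw [norm_smul]; norm_num
        _ ≤ 2⁻¹ * (‖d‖ + ‖z‖ * ‖z‖) := by
            have := norm_add_le d (z*z)
            have := norm_mul_le z z
            gcongr <;> linarith
        _ ≤ 2⁻¹ * (‖d‖ + t * t) := by
            have : ‖z‖ * ‖z‖ ≤ t * t := mul_le_mul hz1 hz1 (norm_nonneg z) ht0
            linarith
        _ = t := by rw [htid]; ring
    · show star ((2⁻¹:ℂ) • (d + z * z)) = (2⁻¹:ℂ) • (d + z * z)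
      rw [star_smul, star_add, star_mul, hz2, hd]
      congr 1
      simp [Complex.ext_iff]
  set f : S → S := fun z => ⟨(2⁻¹:ℂ) • (d + (z:B) * (z:B)), hmem z⟩ with hf
  have hlip : ∀ x y : S, dist (f x) (f y) ≤ t * dist x y := by
    rintro ⟨x, hx1, hx2⟩ ⟨y, hy1, hy2⟩
    simp only [hf, Subtype.dist_eq, dist_eq_norm]
    have key : (2⁻¹:ℂ) • (d + x * x) - (2⁻¹:ℂ) • (d + y * y)
        = (2⁻¹:ℂ) • (x * (x - y) + (x - y) * y) := by
      rw [← smul_sub]; congr 1; noncomm_ring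
    rw [key, norm_smul]
    have h1 : ‖x * (x - y) + (x - y) * y‖ ≤ ‖x‖ * ‖x - y‖ + ‖x - y‖ * ‖y‖ :=
      le_trans (norm_add_le _ _) (add_le_add (norm_mul_le _ _) (norm_mul_le _ _))
    have h2 : ‖x‖ * ‖x - y‖ + ‖x - y‖ * ‖y‖ ≤ t * ‖x - y‖ + t * ‖x - y‖ := by
      nlinarith [norm_nonneg (x - y)]
    have h3 : ‖(2⁻¹:ℂ)‖ = (2⁻¹:ℝ) := by norm_num
    rw [h3]
    calc 2⁻¹ * ‖x * (x - y) + (x - y) * y‖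
        ≤ 2⁻¹ * (t * ‖x - y‖ + t * ‖x - y‖) := by
          exact mul_le_mul_of_nonneg_left (le_trans h1 h2) (by norm_num)
      _ = t * ‖x - y‖ := by ring
  have hcw : ContractingWith ⟨t, ht0⟩ f := by
    constructor
    · exact_mod_cast ht1
    · exact LipschitzWith.of_dist_le_mul hlip
  obtain ⟨y, hy⟩ : ∃ y : S, f y = y := ⟨hcw.fixedPoint f, hcw.fixedPoint_isFixedPt⟩
  refine ⟨(y:B), y.2.2, ?_⟩
  have heq : (2⁻¹:ℂ) • (d + (y:B) * (y:B)) = (y:B) := congrArg Subtype.val hy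
  have h3 : d + (y:B) * (y:B) = (2:ℂ) • (y:B) := by
    calc d + (y:B) * (y:B) = ((2:ℂ) * (2⁻¹:ℂ)) • (d + (y:B) * (y:B)) := by norm_num
      _ = (2:ℂ) • ((2⁻¹:ℂ) • (d + (y:B) * (y:B))) := by rw [mul_smul]
      _ = (2:ℂ) • (y:B) := by rw [heq]
  rw [two_smul] at h3
  rw [← h3]
  abel


private def nupow {B : Type} [NonUnitalNormedRing B] (z : B) : ℕ → B
  | 0 => z
  | n+1 => z * nupow z n

private lemma nupow_add {B : Type} [NonUnitalNormedRing B] (z : B) (m n : ℕ) :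
    nupow z (m + n + 1) = nupow z m * nupow z n := by
  induction m with
  | zero => simp [nupow]
  | succ m ih =>
      have : m + 1 + n + 1 = (m + n + 1) + 1 := by omega
      rw [this]
      show z * nupow z (m + n + 1) = (z * nupow z m) * nupow z n
      rw [ih, mul_assoc]

private lemma nupow_norm_le {B : Type} [NonUnitalNormedRing B] (z : B) (n : ℕ) :
    ‖nupow z n‖ ≤ ‖z‖ ^ (n + 1) := by
  induction n with
  | zero => simp [nupow]
  | succ n ih =>
      calc ‖nupow z (n+1)‖ = ‖z * nupow z n‖ := rfl
        _ ≤ ‖z‖ * ‖nupow z n‖ := norm_mul_le _ _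
        _ ≤ ‖z‖ * ‖z‖ ^ (n+1) := by
            exact mul_le_mul_of_nonneg_left ih (norm_nonneg z)
        _ = ‖z‖ ^ (n+2) := by ring

private lemma nupow_comm {B : Type} [NonUnitalNormedRing B] (z : B) (n : ℕ) :
    nupow z n * z = z * nupow z n := by
  induction n with
  | zero => rfl
  | succ n ih =>
      show (z * nupow z n) * z = z * (z * nupow z n)
      rw [mul_assoc, ih]

private lemma nupow_star {B : Type} [NonUnitalNormedRing B] [StarRing B]
    (z : B) (hz : star z = z) (n : ℕ) : star (nupow z n) = nupow z n := by
  induction n with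
  | zero => exact hz
  | succ n ih =>
      show star (z * nupow z n) = z * nupow z n
      rw [star_mul, ih, hz, nupow_comm]



/-- If `B` is a Banach *-algebra, `I ⊆ B` a (not necessarily closed)
two-sided *-ideal, and `π` a *-homomorphism from `I` into the bounded operators on a
Hilbert space `H`, then `π` is contractive for the norm inherited from `B`. -/
theorem star_hom_on_ideal_contractive
    {B : Type} [NonUnitalNormedRing B] [StarRing B] [NormedStarGroup B]
    [CompleteSpace B] [NormedSpace ℂ B] [IsScalarTower ℂ B B] [SMulCommClass ℂ B B]
    [StarModule ℂ B]
    {H : Type} [NormedAddCommGroup H] [InnerProductSpace ℂ H] [CompleteSpace H]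
    (I : Set B)
    (hIadd : ∀ a ∈ I, ∀ b ∈ I, a + b ∈ I)
    (hIsmul : ∀ (c : ℂ), ∀ a ∈ I, c • a ∈ I)
    (hIstar : ∀ a ∈ I, star a ∈ I)
    (hIideal : ∀ a ∈ I, ∀ b : B, a * b ∈ I ∧ b * a ∈ I)
    (π : B → H →L[ℂ] H)
    (hπadd : ∀ a ∈ I, ∀ b ∈ I, π (a + b) = π a + π b)
    (hπsmul : ∀ (c : ℂ), ∀ a ∈ I, π (c • a) = c • π a)
    (hπmul : ∀ a ∈ I, ∀ b ∈ I, π (a * b) = π a * π b)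
    (hπstar : ∀ a ∈ I, π (star a) = star (π a)) :
    ∀ a ∈ I, ‖π a‖ ≤ ‖a‖ := by
  have hIsub : ∀ u ∈ I, ∀ v ∈ I, u - v ∈ I := by
    intro u hu v hv
    have h := hIadd u hu ((-1:ℂ) • v) (hIsmul (-1) v hv)
    rwa [neg_one_smul, ← sub_eq_add_neg] at h
  intro a ha
  refine ContinuousLinearMap.opNorm_le_bound _ (norm_nonneg a) (fun ξ => ?_)
  set p : B → ℝ := fun z => RCLike.re (inner ℂ (π z ξ) ξ) with hp
  have p_add : ∀ u ∈ I, ∀ v ∈ I, p (u + v) = p u + p v := by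
    intro u hu v hv
    simp [hp, hπadd u hu v hv, ContinuousLinearMap.add_apply, inner_add_left, map_add]
  have p_smul : ∀ (r : ℝ), ∀ u ∈ I, p ((r:ℂ) • u) = r * p u := by
    intro r u hu
    rw [hp]
    simp only [hπsmul _ _ hu, ContinuousLinearMap.smul_apply, inner_smul_left,
      RCLike.conj_ofReal, RCLike.re_ofReal_mul]
    simp [Complex.conj_ofReal, RCLike.re_to_complex, Complex.re_ofReal_mul]
  have p_sq : ∀ w ∈ I, p (star w * w) = ‖π w ξ‖ ^ 2 := by
    intro w hw
    have h1 : π (star w * w) = star (π w) * π w := by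
      rw [hπmul (star w) (hIstar w hw) w hw, hπstar w hw]
    rw [hp]
    simp only [h1, ContinuousLinearMap.star_eq_adjoint]
    have h2 : ((ContinuousLinearMap.adjoint (π w)) * (π w)) ξ
        = (ContinuousLinearMap.adjoint (π w)) ((π w) ξ) := rfl
    rw [h2, ContinuousLinearMap.adjoint_inner_left, inner_self_eq_norm_sq]
  have key : ∀ b ∈ I, ∀ d : B, star d = d → ‖d‖ < 1 →
      p (star b * (d * b)) ≤ p (star b * b) := by
    intro b hb d hd hdn
    obtain ⟨y, hy1, hy2⟩ := sqrt_lemma d hd hdn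
    have hyb : y * b ∈ I := (hIideal b hb y).2
    have hw : b - y * b ∈ I := hIsub b hb _ hyb
    have hdb : d * b ∈ I := (hIideal b hb d).2
    have hm1 : star (b - y*b) * (b - y*b) ∈ I := (hIideal _ hw (star (b - y*b))).2
    have hm2 : star b * (d * b) ∈ I := (hIideal _ hdb (star b)).2
    have hid : star (b - y*b) * (b - y*b) + star b * (d * b) = star b * b := by
      have hsw : star (b - y*b) = star b - star b * y := by
        rw [star_sub, star_mul, hy1]
      rw [hsw, ← hy2]
      noncomm_ring
    have h0 : 0 ≤ p (star (b - y*b) * (b - y*b)) := by rw [p_sq _ hw]; positivity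
    have h3 := p_add _ hm1 _ hm2
    rw [hid] at h3
    linarith
  -- core claim
  have core : ∀ z ∈ I, star z = z → ‖z‖ < 1 → p z ≤ ‖ξ‖ ^ 2 := by
    intro z hz hzs hzn
    by_cases hξ : ξ = 0
    · simp [hp, hξ]
    have hξ' : 0 < ‖ξ‖ := norm_pos_iff.2 hξ
    have hN : (0:ℝ) < ‖ξ‖ ^ 2 := by positivity
    have hmem : ∀ n, nupow z n ∈ I := by
      intro n
      induction n with
      | zero => exact hz
      | succ n ih => exact (hIideal _ ih z).2
    have hstar : ∀ n, star (nupow z n) = nupow z n := nupow_star z hzs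
    set q : ℕ → ℝ := fun n => p (nupow z (2^n - 1)) with hq
    have hpow : ∀ n : ℕ, (2^n - 1) + (2^n - 1) + 1 = 2^(n+1) - 1 := by
      intro n
      have h := pow_pos (show (0:ℕ) < 2 by norm_num) n
      rw [pow_succ]
      omega
    have hqsq : ∀ n, q (n+1) = ‖π (nupow z (2^n - 1)) ξ‖ ^ 2 := by
      intro n
      show p (nupow z (2^(n+1) - 1)) = _
      have h1 : nupow z (2^(n+1) - 1)
          = star (nupow z (2^n - 1)) * nupow z (2^n - 1) := by
        rw [hstar, ← nupow_add]
        congr 1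
        exact (hpow n).symm
      rw [h1, p_sq _ (hmem _)]
    have hqnn : ∀ n, 0 ≤ q (n+1) := by intro n; rw [hqsq n]; positivity
    have hcs : ∀ n, q n ≤ ‖ξ‖ * Real.sqrt (q (n+1)) := by
      intro n
      have h1 : q n ≤ ‖(inner ℂ (π (nupow z (2^n - 1)) ξ) ξ)‖ := RCLike.re_le_norm _
      have h2 : ‖(inner ℂ (π (nupow z (2^n - 1)) ξ) ξ)‖
          ≤ ‖π (nupow z (2^n - 1)) ξ‖ * ‖ξ‖ := norm_inner_le_norm _ _
      have h3 : Real.sqrt (q (n+1)) = ‖π (nupow z (2^n - 1)) ξ‖ := by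
        rw [hqsq n, Real.sqrt_sq (norm_nonneg _)]
      rw [h3]
      calc q n ≤ ‖π (nupow z (2^n - 1)) ξ‖ * ‖ξ‖ := le_trans h1 h2
        _ = ‖ξ‖ * ‖π (nupow z (2^n - 1)) ξ‖ := by ring
    have hbdd : ∀ n, q (n+2) ≤ q 1 := by
      intro n
      have hm4 : 4 ≤ 2^(n+2) := by
        calc (4:ℕ) = 2^2 := by norm_num
          _ ≤ 2^(n+2) := Nat.pow_le_pow_right (by norm_num) (by omega)
      set m := 2^(n+2) with hm
      have hdn' : ‖nupow z (m - 3)‖ < 1 :=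
        lt_of_le_of_lt (nupow_norm_le z _) (pow_lt_one₀ (norm_nonneg z) hzn (by omega))
      have hkey := key z hz (nupow z (m-3)) (hstar _) hdn'
      have e1 : star z * (nupow z (m-3) * z) = nupow z (m - 1) := by
        rw [hzs]
        have h1 : nupow z (m-1) = nupow z 0 * nupow z (m-2) := by
          rw [← nupow_add]; congr 1; omega
        have h2 : nupow z (m-2) = nupow z (m-3) * nupow z 0 := by
          rw [← nupow_add]; congr 1; omega
        rw [h1, h2]; rfl
      have e2 : star z * z = nupow z 1 := by
        rw [hzs]; rfl
      rw [e1, e2] at hkey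
      exact hkey
    set r : ℕ → ℝ := fun n => q n / ‖ξ‖^2 with hr
    have hrs : ∀ n, r n ≤ Real.sqrt (r (n+1)) := by
      intro n
      have h1 : Real.sqrt (r (n+1)) = Real.sqrt (q (n+1)) / ‖ξ‖ := by
        rw [hr]
        rw [Real.sqrt_div (hqnn n), Real.sqrt_sq (norm_nonneg ξ)]
      rw [h1, hr]
      rw [div_le_div_iff₀ hN hξ']
      calc q n * ‖ξ‖ ≤ (‖ξ‖ * Real.sqrt (q (n+1))) * ‖ξ‖ :=
            mul_le_mul_of_nonneg_right (hcs n) (norm_nonneg ξ)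
        _ = Real.sqrt (q (n+1)) * ‖ξ‖^2 := by ring
    set M : ℝ := max (max (r 0) (r 1)) 1 with hM
    have hM1 : (1:ℝ) ≤ M := le_max_right _ _
    have hM0 : (0:ℝ) < M := lt_of_lt_of_le one_pos hM1
    have hrb : ∀ n, r n ≤ M := by
      intro n
      match n with
      | 0 => exact le_trans (le_max_left _ _) (le_max_left _ _)
      | 1 => exact le_trans (le_max_right _ _) (le_max_left _ _)
      | (n+2) =>
        have h1 : r (n+2) ≤ r 1 := by
          rw [hr]
          exact div_le_div_of_nonneg_right (hbdd n) hN.le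
        exact le_trans h1 (le_trans (le_max_right _ _) (le_max_left _ _))
    have claim : ∀ n k, r k ≤ M ^ ((2:ℝ)⁻¹ ^ n) := by
      intro n
      induction n with
      | zero => intro k; simpa using hrb k
      | succ n ih =>
        intro k
        have h1 := hrs k
        have h2 : Real.sqrt (r (k+1)) ≤ Real.sqrt (M ^ ((2:ℝ)⁻¹ ^ n)) :=
          Real.sqrt_le_sqrt (ih (k+1))
        have h3 : Real.sqrt (M ^ ((2:ℝ)⁻¹ ^ n)) = M ^ ((2:ℝ)⁻¹ ^ (n+1)) := by
          rw [Real.sqrt_eq_rpow, ← Real.rpow_mul hM0.le]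
          congr 1
          rw [pow_succ]
          norm_num
        linarith
    have hlim : Filter.Tendsto (fun n : ℕ => M ^ ((2:ℝ)⁻¹ ^ n))
        Filter.atTop (nhds 1) := by
      have h1 : Filter.Tendsto (fun n:ℕ => (2:ℝ)⁻¹ ^ n) Filter.atTop (nhds 0) :=
        tendsto_pow_atTop_nhds_zero_of_lt_one (by norm_num) (by norm_num)
      have h3 : Filter.Tendsto (fun n:ℕ => Real.log M * (2:ℝ)⁻¹ ^ n)
          Filter.atTop (nhds 0) := by
        simpa using h1.const_mul (Real.log M)
      have h4 := (Real.continuous_exp.tendsto 0).comp h3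
      simp only [Function.comp_def, Real.exp_zero] at h4
      refine Filter.Tendsto.congr (fun n => ?_) h4
      rw [Real.rpow_def_of_pos hM0]
    have hr0 : r 0 ≤ 1 := ge_of_tendsto' hlim (fun n => claim n 0)
    have hq0 : q 0 ≤ ‖ξ‖^2 := by
      rw [hr] at hr0
      exact (div_le_one hN).1 hr0
    have : q 0 = p z := by rw [hq]; norm_num; rfl
    linarith [hq0, this.symm.le]
  -- scaled claim
  have scaled : ∀ x ∈ I, star x = x → p x ≤ ‖x‖ * ‖ξ‖^2 := by
    intro x hx hxs
    have hε : ∀ ε : ℝ, 0 < ε → p x ≤ (‖x‖ + ε) * ‖ξ‖^2 := by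
      intro ε hε
      set c : ℝ := (‖x‖ + ε)⁻¹ with hc
      have hce : 0 < ‖x‖ + ε := by positivity
      have hc0 : 0 < c := by positivity
      have hz : ((c:ℂ)) • x ∈ I := hIsmul _ x hx
      have hzs : star ((c:ℂ) • x) = (c:ℂ) • x := by
        rw [star_smul, hxs]
        congr 1
        exact Complex.conj_ofReal c
      have hzn : ‖(c:ℂ) • x‖ < 1 := by
        rw [norm_smul, Complex.norm_real, Real.norm_eq_abs, abs_of_pos hc0, hc]
        rw [inv_mul_lt_iff₀ hce]
        linarith
      have h1 := core _ hz hzs hzn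
      rw [p_smul c x hx] at h1
      have h2 : p x ≤ ‖ξ‖^2 / c := (le_div_iff₀' hc0).2 h1
      have h3 : ‖ξ‖^2 / c = (‖x‖ + ε) * ‖ξ‖^2 := by
        rw [hc, div_inv_eq_mul]; ring
      rw [h3] at h2
      exact h2
    refine le_of_forall_pos_le_add (fun ε hε' => ?_)
    by_cases hN0 : ‖ξ‖^2 = 0
    · have h := hε 1 one_pos
      rw [hN0] at h
      have : ‖x‖ * ‖ξ‖^2 = 0 := by rw [hN0]; ring
      linarith [h, this.symm.le]
    · have hNpos : 0 < ‖ξ‖^2 := lt_of_le_of_ne (by positivity) (Ne.symm hN0)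
      have h := hε (ε / ‖ξ‖^2) (by positivity)
      calc p x ≤ (‖x‖ + ε/‖ξ‖^2) * ‖ξ‖^2 := h
        _ = ‖x‖ * ‖ξ‖^2 + ε := by rw [add_mul, div_mul_cancel₀ _ hN0]
  -- conclusion
  have hx : star a * a ∈ I := (hIideal a ha (star a)).2
  have hxs : star (star a * a) = star a * a := by rw [star_mul, star_star]
  have h1 : ‖π a ξ‖^2 = p (star a * a) := (p_sq a ha).symm
  have h2 := scaled _ hx hxs
  have h3 : ‖star a * a‖ ≤ ‖a‖ * ‖a‖ :=
    le_trans (norm_mul_le _ _) (by rw [norm_star])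
  have h4 : ‖π a ξ‖^2 ≤ (‖a‖ * ‖ξ‖)^2 := by nlinarith [norm_nonneg ξ, sq_nonneg ‖ξ‖]
  calc ‖π a ξ‖ = Real.sqrt (‖π a ξ‖^2) := (Real.sqrt_sq (norm_nonneg _)).symm
    _ ≤ Real.sqrt ((‖a‖ * ‖ξ‖)^2) := Real.sqrt_le_sqrt h4
    _ = ‖a‖ * ‖ξ‖ := Real.sqrt_sq (by positivity)
end

section
/- Let B be a Banach *-algebra with a two-sided *-ideal I, and let π : I → B(H) be a nondegenerate *-representation (meaning the closed span of π(I)H equals H). Then π admits a unique extension to a *-representation π' : B → B(H). -/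
open scoped InnerProductSpace

section Aux2
variable {B : Type} [NonUnitalNormedRing B] [StarRing B] [NormedStarGroup B]
    [CompleteSpace B] [NormedSpace ℂ B] [IsScalarTower ℂ B B] [SMulCommClass ℂ B B]
    [StarModule ℂ B]
    {H : Type} [NormedAddCommGroup H] [InnerProductSpace ℂ H] [CompleteSpace H]

theorem auxA (I : Set B)
    (hIadd : ∀ a ∈ I, ∀ b ∈ I, a + b ∈ I)
    (hIsmul : ∀ (c : ℂ), ∀ a ∈ I, c • a ∈ I)
    (hIideal : ∀ a ∈ I, ∀ b : B, a * b ∈ I ∧ b * a ∈ I)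
    (π : B → H →L[ℂ] H)
    (hπadd : ∀ a ∈ I, ∀ b ∈ I, π (a + b) = π a + π b)
    (hπsmul : ∀ (c : ℂ), ∀ a ∈ I, π (c • a) = c • π a)
    (hπmul : ∀ a ∈ I, ∀ b ∈ I, π (a * b) = π a * π b)
    {h : B} (hh : h ∈ I) {lam : ℂ} (hlam : ‖h‖ < ‖lam‖) :
    IsUnit (algebraMap ℂ (H →L[ℂ] H) lam - π h) := by
  have hlam0 : lam ≠ 0 := by
    intro e
    rw [e, norm_zero] at hlam
    exact absurd hlam (not_lt.mpr (norm_nonneg h))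
  set u : B := lam⁻¹ • h with hu_def
  have huI : u ∈ I := hIsmul _ h hh
  have hu_norm : ‖u‖ < 1 := by
    rw [hu_def, norm_smul, norm_inv]
    rw [inv_mul_lt_iff₀ (lt_of_le_of_lt (norm_nonneg h) hlam), mul_one]
    exact hlam
  set p : ℕ → B := fun n => (fun x => u * x)^[n] u with hp_def
  have hp0 : p 0 = u := rfl
  have hpsucc : ∀ n, p (n + 1) = u * p n := fun n => Function.iterate_succ_apply' _ n u
  have hpsucc' : ∀ n, p (n + 1) = p n * u := by
    intro n
    induction n with
    | zero => rw [hpsucc, hp0]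
    | succ n ih => rw [hpsucc (n + 1), ih, ← mul_assoc, ← hpsucc n, ih]
  have hp_norm : ∀ n, ‖p n‖ ≤ ‖u‖ ^ (n + 1) := by
    intro n
    induction n with
    | zero => simpa [hp0] using le_refl ‖u‖
    | succ n ih =>
      rw [hpsucc]
      calc ‖u * p n‖ ≤ ‖u‖ * ‖p n‖ := norm_mul_le _ _
        _ ≤ ‖u‖ * ‖u‖ ^ (n + 1) := mul_le_mul_of_nonneg_left ih (norm_nonneg u)
        _ = ‖u‖ ^ (n + 2) := by ring
  have hps : Summable p := by
    refine Summable.of_norm_bounded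
      ((summable_geometric_of_lt_one (norm_nonneg u) hu_norm).mul_left ‖u‖) ?_
    intro n
    calc ‖p n‖ ≤ ‖u‖ ^ (n + 1) := hp_norm n
      _ = ‖u‖ * ‖u‖ ^ n := by ring
  set k : B := ∑' n, p n with hk_def
  have h1 : k = u + ∑' n, p (n + 1) := by
    rw [hk_def, hps.tsum_eq_zero_add, hp0]
  have hshift : ∑' n, p (n + 1) = k - u := by rw [h1]; abel
  have hps' : Summable (fun n => p (n + 1)) := by
    rw [← summable_nat_add_iff 1] at hps; exact hps
  have hmulk : u * k = k - u := by
    rw [hk_def, ← Summable.tsum_mul_left u hps]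
    rw [show (fun n => u * p n) = fun n => p (n + 1) by funext n; rw [hpsucc]]
    rw [← hk_def]; exact hshift
  have hmulk' : k * u = k - u := by
    rw [hk_def, ← Summable.tsum_mul_right u hps]
    rw [show (fun n => p n * u) = fun n => p (n + 1) by funext n; rw [hpsucc']]
    rw [← hk_def]; exact hshift
  have hkeq : k = u + u * k := by rw [hmulk]; abel
  have hkeq' : k = u + k * u := by rw [hmulk']; abel
  have hukI : u * k ∈ I := (hIideal u huI k).1
  have hkuI : k * u ∈ I := (hIideal u huI k).2
  have hkI : k ∈ I := by rw [hkeq]; exact hIadd u huI _ hukI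
  have hπuk : π (u * k) = π k - π u := by
    have h2 := hπadd u huI (u * k) hukI
    rw [← hkeq] at h2
    rw [h2]; abel
  have hπku : π (k * u) = π k - π u := by
    have h2 := hπadd u huI (k * u) hkuI
    rw [← hkeq'] at h2
    rw [h2]; abel
  have hUK : π u * π k = π k - π u := by rw [← hπmul u huI k hkI, hmulk, ← hπuk, hmulk]
  have hKU : π k * π u = π k - π u := by rw [← hπmul k hkI u huI, hmulk', ← hπku, hmulk']
  have hh_eq : h = lam • u := by rw [hu_def, smul_smul, mul_inv_cancel₀ hlam0, one_smul]
  have hπh : π h = lam • π u := by rw [hh_eq, hπsmul lam u huI]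
  refine isUnit_iff_exists.mpr ⟨lam⁻¹ • (1 + π k), ?_, ?_⟩
  · rw [Algebra.algebraMap_eq_smul_one, hπh]
    have expand : (lam • (1 : H →L[ℂ] H) - lam • π u) * (lam⁻¹ • (1 + π k))
        = (lam * lam⁻¹) • ((1 - π u) * (1 + π k)) := by
      rw [← smul_sub, smul_mul_assoc, mul_smul_comm, smul_smul]
    rw [expand, mul_inv_cancel₀ hlam0, one_smul]
    rw [sub_mul, mul_add, mul_add, one_mul, one_mul, mul_one, hUK]
    abel
  · rw [Algebra.algebraMap_eq_smul_one, hπh]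
    have expand : (lam⁻¹ • (1 + π k)) * (lam • (1 : H →L[ℂ] H) - lam • π u)
        = (lam⁻¹ * lam) • ((1 + π k) * (1 - π u)) := by
      rw [← smul_sub, smul_mul_assoc, mul_smul_comm, smul_smul]
    rw [expand, inv_mul_cancel₀ hlam0, one_smul]
    rw [mul_sub, mul_one, add_mul, one_mul, hKU]
    abel

theorem auxB (I : Set B)
    (hIadd : ∀ a ∈ I, ∀ b ∈ I, a + b ∈ I)
    (hIsmul : ∀ (c : ℂ), ∀ a ∈ I, c • a ∈ I)
    (hIideal : ∀ a ∈ I, ∀ b : B, a * b ∈ I ∧ b * a ∈ I)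
    (π : B → H →L[ℂ] H)
    (hπadd : ∀ a ∈ I, ∀ b ∈ I, π (a + b) = π a + π b)
    (hπsmul : ∀ (c : ℂ), ∀ a ∈ I, π (c • a) = c • π a)
    (hπmul : ∀ a ∈ I, ∀ b ∈ I, π (a * b) = π a * π b)
    (hπstar : ∀ a ∈ I, π (star a) = star (π a))
    {h : B} (hh : h ∈ I) (hsa : star h = h) : ‖π h‖ ≤ ‖h‖ := by
  have hsaT : IsSelfAdjoint (π h) := by
    rw [IsSelfAdjoint, ← hπstar h hh, hsa]
  have hspec : spectralRadius ℂ (π h) ≤ (‖h‖₊ : ENNReal) := by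
    refine iSup₂_le fun lam hlam => ?_
    by_contra hc
    push_neg at hc
    have hlt : ‖h‖ < ‖lam‖ := by
      have := ENNReal.coe_lt_coe.mp hc
      exact_mod_cast this
    exact (spectrum.notMem_iff.mpr
      (auxA I hIadd hIsmul hIideal π hπadd hπsmul hπmul hh hlt)) hlam
  rw [hsaT.spectralRadius_eq_nnnorm] at hspec
  have := ENNReal.coe_le_coe.mp hspec
  exact_mod_cast this

theorem auxC (I : Set B)
    (hIadd : ∀ a ∈ I, ∀ b ∈ I, a + b ∈ I)
    (hIsmul : ∀ (c : ℂ), ∀ a ∈ I, c • a ∈ I)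
    (hIstar : ∀ a ∈ I, star a ∈ I)
    (hIideal : ∀ a ∈ I, ∀ b : B, a * b ∈ I ∧ b * a ∈ I)
    (π : B → H →L[ℂ] H)
    (hπadd : ∀ a ∈ I, ∀ b ∈ I, π (a + b) = π a + π b)
    (hπsmul : ∀ (c : ℂ), ∀ a ∈ I, π (c • a) = c • π a)
    (hπmul : ∀ a ∈ I, ∀ b ∈ I, π (a * b) = π a * π b)
    (hπstar : ∀ a ∈ I, π (star a) = star (π a))
    {a : B} (ha : a ∈ I) : ‖π a‖ ≤ ‖a‖ := by
  have h1 : ‖π a‖ * ‖π a‖ = ‖π (star a * a)‖ := by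
    rw [hπmul (star a) (hIstar a ha) a ha, hπstar a ha]
    exact (CStarRing.norm_star_mul_self).symm
  have hmem : star a * a ∈ I := (hIideal (star a) (hIstar a ha) a).1
  have hsa : star (star a * a) = star a * a := by simp [star_mul]
  have h2 : ‖π (star a * a)‖ ≤ ‖star a * a‖ :=
    auxB I hIadd hIsmul hIideal π hπadd hπsmul hπmul hπstar hmem hsa
  have h3 : ‖star a * a‖ ≤ ‖a‖ * ‖a‖ := by
    calc ‖star a * a‖ ≤ ‖star a‖ * ‖a‖ := norm_mul_le _ _
      _ = ‖a‖ * ‖a‖ := by rw [norm_star]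
  nlinarith [norm_nonneg (π a), norm_nonneg a]


theorem auxL1 (I : Set B)
    (hIstar : ∀ a ∈ I, star a ∈ I)
    (π : B → H →L[ℂ] H)
    (hπmul : ∀ a ∈ I, ∀ b ∈ I, π (a * b) = π a * π b)
    (hπstar : ∀ a ∈ I, π (star a) = star (π a))
    {a d : B} (ha : a ∈ I) (hd : d ∈ I) (ξ η : H) :
    ⟪π a ξ, π d η⟫_ℂ = ⟪ξ, π (star a * d) η⟫_ℂ := by
  have h1 : π (star a * d) η = (ContinuousLinearMap.adjoint (π a)) (π d η) := by
    rw [hπmul (star a) (hIstar a ha) d hd, hπstar a ha,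
      ContinuousLinearMap.star_eq_adjoint]
    rfl
  rw [h1, ContinuousLinearMap.adjoint_inner_right]

theorem auxMaster (I : Set B)
    (hIadd : ∀ a ∈ I, ∀ b ∈ I, a + b ∈ I)
    (hIsmul : ∀ (c : ℂ), ∀ a ∈ I, c • a ∈ I)
    (hIstar : ∀ a ∈ I, star a ∈ I)
    (hIideal : ∀ a ∈ I, ∀ b : B, a * b ∈ I ∧ b * a ∈ I)
    (π : B → H →L[ℂ] H)
    (hπadd : ∀ a ∈ I, ∀ b ∈ I, π (a + b) = π a + π b)
    (hπsmul : ∀ (c : ℂ), ∀ a ∈ I, π (c • a) = c • π a)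
    (hπmul : ∀ a ∈ I, ∀ b ∈ I, π (a * b) = π a * π b)
    (hπstar : ∀ a ∈ I, π (star a) = star (π a))
    (s : Finset {p : B × H // p.1 ∈ I}) (c : {p : B × H // p.1 ∈ I} → ℂ) (b : B) :
    ‖∑ p ∈ s, c p • π (b * p.val.1) p.val.2‖ ≤
      ‖b‖ * ‖∑ p ∈ s, c p • π p.val.1 p.val.2‖ := by
  have contr : ∀ y ∈ I, ‖π y‖ ≤ ‖y‖ := fun y hy =>
    auxC I hIadd hIsmul hIstar hIideal π hπadd hπsmul hπmul hπstar hy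
  set W : B → H := fun x => ∑ p ∈ s, c p • π (x * p.val.1) p.val.2 with hW
  set V : H := ∑ p ∈ s, c p • π p.val.1 p.val.2 with hV
  -- L2 : inner product identity
  have L2 : ∀ x y : B, ⟪W x, W y⟫_ℂ = ⟪V, W (star x * y)⟫_ℂ := by
    intro x y
    rw [hW, hV]
    simp only [sum_inner]
    refine Finset.sum_congr rfl fun p _ => ?_
    simp only [inner_sum]
    refine Finset.sum_congr rfl fun q _ => ?_
    rw [inner_smul_left, inner_smul_left, inner_smul_right, inner_smul_right]
    congr 1
    congr 1
    rw [auxL1 I hIstar π hπmul hπstar (hIideal p.val.1 p.prop x).2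
      (hIideal q.val.1 q.prop y).2,
      auxL1 I hIstar π hπmul hπstar p.prop (hIideal q.val.1 q.prop (star x * y)).2]
    congr 2
    rw [star_mul]
    simp [mul_assoc]
  -- L3 : crude bound
  set C : ℝ := ∑ p ∈ s, ‖c p‖ * (‖p.val.1‖ * ‖p.val.2‖) with hC
  have hCnn : 0 ≤ C := Finset.sum_nonneg fun p _ => by positivity
  have L3 : ∀ z : B, ‖W z‖ ≤ C * ‖z‖ := by
    intro z
    calc ‖W z‖ ≤ ∑ p ∈ s, ‖c p • π (z * p.val.1) p.val.2‖ := norm_sum_le _ _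
      _ ≤ ∑ p ∈ s, ‖c p‖ * (‖p.val.1‖ * ‖p.val.2‖) * ‖z‖ := by
          refine Finset.sum_le_sum fun p _ => ?_
          rw [norm_smul]
          have h1 : ‖π (z * p.val.1) p.val.2‖ ≤ ‖z * p.val.1‖ * ‖p.val.2‖ :=
            le_trans ((π _).le_opNorm _)
              (mul_le_mul_of_nonneg_right (contr _ (hIideal p.val.1 p.prop z).2)
                (norm_nonneg _))
          have h2 : ‖z * p.val.1‖ ≤ ‖z‖ * ‖p.val.1‖ := norm_mul_le _ _
          calc ‖c p‖ * ‖π (z * p.val.1) p.val.2‖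
              ≤ ‖c p‖ * (‖z * p.val.1‖ * ‖p.val.2‖) :=
                mul_le_mul_of_nonneg_left h1 (norm_nonneg _)
            _ ≤ ‖c p‖ * (‖z‖ * ‖p.val.1‖ * ‖p.val.2‖) :=
                mul_le_mul_of_nonneg_left
                  (mul_le_mul_of_nonneg_right h2 (norm_nonneg _)) (norm_nonneg _)
            _ = ‖c p‖ * (‖p.val.1‖ * ‖p.val.2‖) * ‖z‖ := by ring
      _ = C * ‖z‖ := by rw [hC, ← Finset.sum_mul]
  -- L4
  have L4 : ∀ x : B, ‖W x‖ ^ 2 ≤ ‖V‖ * ‖W (star x * x)‖ := by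
    intro x
    have h1 : (‖W x‖ : ℝ) ^ 2 = ‖⟪W x, W x⟫_ℂ‖ := by
      rw [inner_self_eq_norm_sq_to_K]
      rw [norm_pow]
      norm_num
    rw [h1, L2 x x]
    exact norm_inner_le_norm _ _
  -- main bound for selfadjoint elements
  have MainSA : ∀ h : B, star h = h → ‖W h‖ ≤ ‖V‖ * ‖h‖ := by
    intro h hsa
    set q : ℕ → B := fun n => (fun x => x * x)^[n] h with hq
    have hq0 : q 0 = h := rfl
    have hqs : ∀ n, q (n + 1) = q n * q n := fun n => Function.iterate_succ_apply' _ n h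
    have hqsa : ∀ n, star (q n) = q n := by
      intro n
      induction n with
      | zero => exact hsa
      | succ n ih => rw [hqs, star_mul, ih]
    have hqnorm : ∀ n, ‖q n‖ ≤ ‖h‖ ^ (2 ^ n) := by
      intro n
      induction n with
      | zero => simp [hq0]
      | succ n ih =>
        rw [hqs]
        calc ‖q n * q n‖ ≤ ‖q n‖ * ‖q n‖ := norm_mul_le _ _
          _ ≤ ‖h‖ ^ 2 ^ n * ‖h‖ ^ 2 ^ n :=
              mul_le_mul ih ih (norm_nonneg _) (pow_nonneg (norm_nonneg _) _)
          _ = ‖h‖ ^ 2 ^ (n + 1) := by rw [← pow_add]; congr 1; ring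
    have L6 : ∀ n, ‖W h‖ ^ (2 ^ n) ≤ ‖V‖ ^ (2 ^ n - 1) * ‖W (q n)‖ := by
      intro n
      induction n with
      | zero => simp [hq0]
      | succ n ih =>
        have hle2 : (1 : ℕ) ≤ 2 ^ n := Nat.one_le_two_pow
        have hexp : (2 : ℕ) ^ (n + 1) = 2 ^ n + 2 ^ n := by ring
        have hL4 : ‖W (q n)‖ ^ 2 ≤ ‖V‖ * ‖W (q (n + 1))‖ := by
          have := L4 (q n)
          rwa [hqsa n, ← hqs n] at this
        calc ‖W h‖ ^ 2 ^ (n + 1) = (‖W h‖ ^ 2 ^ n) ^ 2 := by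
              rw [← pow_mul, pow_succ]
          _ ≤ (‖V‖ ^ (2 ^ n - 1) * ‖W (q n)‖) ^ 2 :=
              pow_le_pow_left₀ (pow_nonneg (norm_nonneg _) _) ih 2
          _ = ‖V‖ ^ (2 ^ n - 1) * ‖V‖ ^ (2 ^ n - 1) * ‖W (q n)‖ ^ 2 := by ring
          _ ≤ ‖V‖ ^ (2 ^ n - 1) * ‖V‖ ^ (2 ^ n - 1) * (‖V‖ * ‖W (q (n + 1))‖) := by
              have hnn : (0:ℝ) ≤ ‖V‖ ^ (2 ^ n - 1) * ‖V‖ ^ (2 ^ n - 1) := by positivity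
              exact mul_le_mul_of_nonneg_left hL4 hnn
          _ = ‖V‖ ^ ((2 ^ n - 1) + (2 ^ n - 1) + 1) * ‖W (q (n + 1))‖ := by
              rw [pow_add, pow_add, pow_one]; ring
          _ = ‖V‖ ^ (2 ^ (n + 1) - 1) * ‖W (q (n + 1))‖ := by
              have hsub : 2 ^ n - 1 + (2 ^ n - 1) + 1 = 2 ^ (n + 1) - 1 := by
                obtain ⟨m, hm⟩ : ∃ m, 2 ^ n = m + 1 :=
                  ⟨2 ^ n - 1, (Nat.sub_add_cancel hle2).symm⟩
                rw [hexp, hm]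
                omega
              rw [← hsub]
    by_contra hcon
    push_neg at hcon
    have hV0 : 0 < ‖V‖ := by
      rcases (norm_nonneg V).lt_or_eq with h' | h'
      · exact h'
      · exfalso
        have h6 := L6 1
        norm_num at h6
        rw [← h'] at h6 hcon
        nlinarith [norm_nonneg (W h), norm_nonneg h, norm_nonneg (W (q 1))]
    have hh0 : 0 < ‖h‖ := by
      rcases (norm_nonneg h).lt_or_eq with h' | h'
      · exact h'
      · exfalso
        have h3 := L3 h
        rw [← h'] at h3 hcon
        nlinarith [norm_nonneg (W h)]
    set t : ℝ := ‖W h‖ / (‖V‖ * ‖h‖) with ht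
    have ht1 : 1 < t := (one_lt_div (by positivity)).mpr hcon
    have hbound : ∀ n : ℕ, t ^ (2 ^ n) ≤ C / ‖V‖ := by
      intro n
      have h1 := L6 n
      have h3 : ‖W (q n)‖ ≤ C * ‖h‖ ^ 2 ^ n :=
        le_trans (L3 (q n)) (mul_le_mul_of_nonneg_left (hqnorm n) hCnn)
      have h4 : ‖W h‖ ^ 2 ^ n ≤ ‖V‖ ^ (2 ^ n - 1) * (C * ‖h‖ ^ 2 ^ n) :=
        le_trans h1 (mul_le_mul_of_nonneg_left h3 (by positivity))
      rw [ht, div_pow, div_le_div_iff₀ (by positivity) hV0]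
      have hsub : (2:ℕ) ^ n - 1 + 1 = 2 ^ n := Nat.sub_add_cancel Nat.one_le_two_pow
      calc ‖W h‖ ^ 2 ^ n * ‖V‖ ≤ (‖V‖ ^ (2 ^ n - 1) * (C * ‖h‖ ^ 2 ^ n)) * ‖V‖ :=
            mul_le_mul_of_nonneg_right h4 (norm_nonneg V)
        _ = C * (‖V‖ ^ (2 ^ n - 1 + 1) * ‖h‖ ^ 2 ^ n) := by rw [pow_add, pow_one]; ring
        _ = C * (‖V‖ * ‖h‖) ^ 2 ^ n := by rw [hsub, mul_pow]
    obtain ⟨m, hm⟩ := pow_unbounded_of_one_lt (C / ‖V‖) ht1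
    have hmono : t ^ m ≤ t ^ (2 ^ m) :=
      pow_le_pow_right₀ ht1.le (le_of_lt m.lt_two_pow_self)
    exact absurd (hbound m) (not_le.mpr (lt_of_lt_of_le hm hmono))
  -- general b
  have hsa' : star (star b * b) = star b * b := by simp [star_mul]
  have h2 := MainSA (star b * b) hsa'
  have h1 := L4 b
  have h3 : ‖star b * b‖ ≤ ‖b‖ * ‖b‖ := by
    calc ‖star b * b‖ ≤ ‖star b‖ * ‖b‖ := norm_mul_le _ _
      _ = ‖b‖ * ‖b‖ := by rw [norm_star]
  have c1 : ‖V‖ * ‖W (star b * b)‖ ≤ ‖V‖ * (‖V‖ * ‖star b * b‖) :=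
    mul_le_mul_of_nonneg_left h2 (norm_nonneg V)
  have c2 : ‖V‖ * (‖V‖ * ‖star b * b‖) ≤ ‖V‖ * (‖V‖ * (‖b‖ * ‖b‖)) := by
    have := mul_le_mul_of_nonneg_left h3 (norm_nonneg V)
    exact mul_le_mul_of_nonneg_left this (norm_nonneg V)
  have key : ‖W b‖ ^ 2 ≤ (‖b‖ * ‖V‖) ^ 2 := by nlinarith
  exact le_of_pow_le_pow_left₀ two_ne_zero (by positivity) key

end Aux2



/-- A nondegenerate *-representation `π` of a two-sided *-ideal `I` of a
Banach *-algebra `B` on a Hilbert space extends uniquely to a *-representation of `B`. -/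
theorem nondegenerate_rep_of_ideal_extends_uniquely
    {B : Type} [NonUnitalNormedRing B] [StarRing B] [NormedStarGroup B]
    [CompleteSpace B] [NormedSpace ℂ B] [IsScalarTower ℂ B B] [SMulCommClass ℂ B B]
    [StarModule ℂ B]
    {H : Type} [NormedAddCommGroup H] [InnerProductSpace ℂ H] [CompleteSpace H]
    (I : Set B)
    (hIadd : ∀ a ∈ I, ∀ b ∈ I, a + b ∈ I)
    (hIsmul : ∀ (c : ℂ), ∀ a ∈ I, c • a ∈ I)
    (hIstar : ∀ a ∈ I, star a ∈ I)
    (hIideal : ∀ a ∈ I, ∀ b : B, a * b ∈ I ∧ b * a ∈ I)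
    (π : B → H →L[ℂ] H)
    (hπadd : ∀ a ∈ I, ∀ b ∈ I, π (a + b) = π a + π b)
    (hπsmul : ∀ (c : ℂ), ∀ a ∈ I, π (c • a) = c • π a)
    (hπmul : ∀ a ∈ I, ∀ b ∈ I, π (a * b) = π a * π b)
    (hπstar : ∀ a ∈ I, π (star a) = star (π a))
    (hnondeg :
      (Submodule.span ℂ {x : H | ∃ a ∈ I, ∃ ξ : H, (π a) ξ = x}).topologicalClosure = ⊤) :
    ∃! π' : B → H →L[ℂ] H,
      (∀ a b : B, π' (a + b) = π' a + π' b) ∧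
      (∀ (c : ℂ) (a : B), π' (c • a) = c • π' a) ∧
      (∀ a b : B, π' (a * b) = π' a * π' b) ∧
      (∀ a : B, π' (star a) = star (π' a)) ∧
      (∀ a ∈ I, π' a = π a) := by
  classical
  -- the generating set
  set S : Set H := {x : H | ∃ a ∈ I, ∃ ξ : H, (π a) ξ = x} with hSdef
  have hdenseS : Dense ((Submodule.span ℂ S : Submodule ℂ H) : Set H) :=
    Submodule.dense_iff_topologicalClosure_eq_top.mpr hnondeg
  -- vector separation lemma
  have vec_ext : ∀ u v : H, (∀ x ∈ S, ⟪x, u⟫_ℂ = ⟪x, v⟫_ℂ) → u = v := by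
    intro u v huv
    set K : Submodule ℂ H :=
      { carrier := {y : H | ⟪y, u - v⟫_ℂ = 0}
        add_mem' := fun {y} {z} hy hz => by
          simp only [Set.mem_setOf_eq] at hy hz ⊢
          rw [inner_add_left, hy, hz, add_zero]
        zero_mem' := by simp
        smul_mem' := fun cc {y} hy => by
          simp only [Set.mem_setOf_eq] at hy ⊢
          rw [inner_smul_left, hy, mul_zero] } with hK
    have hSK : S ⊆ (K : Set H) := by
      intro x hx
      have := huv x hx
      simp only [SetLike.mem_coe]
      show ⟪x, u - v⟫_ℂ = 0
      rw [inner_sub_right, this, sub_self]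
    have hspanK : (Submodule.span ℂ S : Submodule ℂ H) ≤ K := Submodule.span_le.mpr hSK
    have hclosed : IsClosed (K : Set H) := by
      have : (K : Set H) = (fun y : H => ⟪y, u - v⟫_ℂ) ⁻¹' {0} := rfl
      rw [this]
      exact IsClosed.preimage (Continuous.inner continuous_id continuous_const)
        isClosed_singleton
    have hall : ∀ x : H, x ∈ K := by
      intro x
      have hx : x ∈ closure ((Submodule.span ℂ S : Submodule ℂ H) : Set H) := hdenseS x
      have : closure ((Submodule.span ℂ S : Submodule ℂ H) : Set H) ⊆ (K : Set H) :=
        closure_minimal hspanK hclosed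
      exact this hx
    have h0 : ⟪u - v, u - v⟫_ℂ = 0 := hall (u - v)
    rw [inner_self_eq_zero] at h0
    exact sub_eq_zero.mp h0
  by_cases hIne : I.Nonempty
  · -- main case
    set ι := {p : B × H // p.1 ∈ I} with hι
    set g : ι → H := fun p => π p.val.1 p.val.2 with hg
    have hSg : S = Set.range g := by
      ext x
      constructor
      · rintro ⟨a, ha, ξ, rfl⟩
        exact ⟨⟨(a, ξ), ha⟩, rfl⟩
      · rintro ⟨p, rfl⟩
        exact ⟨p.val.1, p.prop, p.val.2, rfl⟩
    set D : Submodule ℂ H := LinearMap.range (Finsupp.linearCombination ℂ g) with hD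
    have hDspan : D = Submodule.span ℂ S := by
      rw [hD, Finsupp.range_linearCombination, hSg]
    have hDdense : Dense (D : Set H) := by rw [hDspan]; exact hdenseS
    have master : ∀ (b : B) (f : ι →₀ ℂ),
        ‖Finsupp.linearCombination ℂ (fun p : ι => π (b * p.val.1) p.val.2) f‖ ≤
          ‖b‖ * ‖Finsupp.linearCombination ℂ g f‖ := by
      intro b f
      rw [Finsupp.linearCombination_apply, Finsupp.linearCombination_apply,
        Finsupp.sum, Finsupp.sum]
      exact auxMaster I hIadd hIsmul hIstar hIideal π hπadd hπsmul hπmul hπstar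
        f.support (⇑f) b
    have exists_ext : ∀ b : B, ∃ T : H →L[ℂ] H,
        ∀ a ∈ I, ∀ ξ : H, T (π a ξ) = π (b * a) ξ := by
      intro b
      set gb : ι → H := fun p => π (b * p.val.1) p.val.2 with hgb
      have wd : ∀ f f' : ι →₀ ℂ,
          Finsupp.linearCombination ℂ g f = Finsupp.linearCombination ℂ g f' →
          Finsupp.linearCombination ℂ gb f = Finsupp.linearCombination ℂ gb f' := by
        intro f f' hff
        have hm := master b (f - f')
        rw [map_sub, map_sub, hff, sub_self, norm_zero, mul_zero] at hm
        have h0 : Finsupp.linearCombination ℂ gb f - Finsupp.linearCombination ℂ gb f' = 0 :=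
          norm_le_zero_iff.mp hm
        exact sub_eq_zero.mp h0
      have hrep : ∀ d : D, ∃ f : ι →₀ ℂ,
          Finsupp.linearCombination ℂ g f = (d : H) := fun d => LinearMap.mem_range.mp d.prop
      choose rep hrep' using hrep
      set L0 : D → H := fun d => Finsupp.linearCombination ℂ gb (rep d) with hL0
      have key : ∀ (d : D) (f : ι →₀ ℂ), Finsupp.linearCombination ℂ g f = (d : H) →
          L0 d = Finsupp.linearCombination ℂ gb f :=
        fun d f hf => wd _ _ ((hrep' d).trans hf.symm)
      have L0add : ∀ d d' : D, L0 (d + d') = L0 d + L0 d' := by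
        intro d d'
        rw [key (d + d') (rep d + rep d')
            (by rw [map_add, hrep' d, hrep' d']; rfl), map_add]
      have L0smul : ∀ (cc : ℂ) (d : D), L0 (cc • d) = cc • L0 d := by
        intro cc d
        rw [key (cc • d) (cc • rep d)
            (by rw [map_smul, hrep' d]; rfl), map_smul]
      have L0bound : ∀ d : D, ‖L0 d‖ ≤ ‖b‖ * ‖d‖ := by
        intro d
        calc ‖L0 d‖ = ‖Finsupp.linearCombination ℂ gb (rep d)‖ := rfl
          _ ≤ ‖b‖ * ‖Finsupp.linearCombination ℂ g (rep d)‖ := master b _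
          _ = ‖b‖ * ‖d‖ := by rw [hrep' d]; rfl
      set L1 : D →ₗ[ℂ] H :=
        { toFun := L0, map_add' := L0add, map_smul' := L0smul } with hL1
      set L : D →L[ℂ] H := L1.mkContinuous ‖b‖ L0bound with hLdef
      have h_e : IsUniformInducing (D.subtypeL) := by
        have : Isometry (D.subtypeL) := isometry_subtype_coe
        exact this.isUniformInducing
      have h_dense : DenseRange (D.subtypeL) := by
        have hr : Set.range (D.subtypeL) = (D : Set H) := Subtype.range_coe
        rw [DenseRange, hr]
        exact hDdense
      refine ⟨L.extend D.subtypeL, ?_⟩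
      intro a ha ξ
      have hmem : π a ξ = Finsupp.linearCombination ℂ g (Finsupp.single ⟨(a, ξ), ha⟩ 1) := by
        rw [Finsupp.linearCombination_single, one_smul]
      have hmemD : π a ξ ∈ D := ⟨_, hmem.symm⟩
      have hcalc : (L.extend D.subtypeL) (π a ξ) = L ⟨π a ξ, hmemD⟩ :=
        ContinuousLinearMap.extend_eq L h_dense h_e ⟨π a ξ, hmemD⟩
      rw [hcalc]
      have hL : L ⟨π a ξ, hmemD⟩ = L0 ⟨π a ξ, hmemD⟩ := rfl
      rw [hL, key ⟨π a ξ, hmemD⟩ (Finsupp.single ⟨(a, ξ), ha⟩ 1) hmem.symm,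
        Finsupp.linearCombination_single, one_smul]
    choose π' hπ' using exists_ext
    have char : ∀ (b : B) (T : H →L[ℂ] H),
        (∀ a ∈ I, ∀ ξ : H, T (π a ξ) = π (b * a) ξ) → T = π' b := by
      intro b T hT
      refine ContinuousLinearMap.ext_on hdenseS ?_
      rintro x ⟨a, ha, ξ, rfl⟩
      rw [hT a ha ξ, hπ' b a ha ξ]
    have propadd : ∀ b₁ b₂ : B, π' (b₁ + b₂) = π' b₁ + π' b₂ := by
      intro b₁ b₂
      refine (char (b₁ + b₂) (π' b₁ + π' b₂) ?_).symm
      intro a ha ξ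
      have h1 : (b₁ + b₂) * a = b₁ * a + b₂ * a := add_mul _ _ _
      rw [ContinuousLinearMap.add_apply, hπ' b₁ a ha ξ, hπ' b₂ a ha ξ, h1,
        hπadd _ (hIideal a ha b₁).2 _ (hIideal a ha b₂).2]
      rfl
    have propsmul : ∀ (cc : ℂ) (b : B), π' (cc • b) = cc • π' b := by
      intro cc b
      refine (char (cc • b) (cc • π' b) ?_).symm
      intro a ha ξ
      have h1 : (cc • b) * a = cc • (b * a) := smul_mul_assoc _ _ _
      rw [ContinuousLinearMap.smul_apply, hπ' b a ha ξ, h1,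
        hπsmul cc _ (hIideal a ha b).2]
      rfl
    have propmul : ∀ b₁ b₂ : B, π' (b₁ * b₂) = π' b₁ * π' b₂ := by
      intro b₁ b₂
      refine (char (b₁ * b₂) (π' b₁ * π' b₂) ?_).symm
      intro a ha ξ
      rw [ContinuousLinearMap.mul_apply, hπ' b₂ a ha ξ,
        hπ' b₁ (b₂ * a) (hIideal a ha b₂).2 ξ, ← mul_assoc]
    have propstar : ∀ b : B, π' (star b) = star (π' b) := by
      intro b
      refine (char (star b) (star (π' b)) ?_).symm
      intro a ha ξ
      apply vec_ext
      rintro x ⟨cx, hcx, η, rfl⟩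
      rw [ContinuousLinearMap.star_eq_adjoint, ContinuousLinearMap.adjoint_inner_right,
        hπ' b cx hcx η,
        auxL1 I hIstar π hπmul hπstar (hIideal cx hcx b).2 ha η ξ,
        auxL1 I hIstar π hπmul hπstar hcx (hIideal a ha (star b)).2 η ξ]
      congr 2
      rw [star_mul]
      simp [mul_assoc]
    have prop5 : ∀ a ∈ I, π' a = π a := by
      intro a ha
      refine (char a (π a) ?_).symm
      intro a' ha' ξ
      rw [← ContinuousLinearMap.mul_apply, ← hπmul a ha a' ha']
    refine ⟨π', ⟨propadd, propsmul, propmul, propstar, prop5⟩, ?_⟩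
    rintro π'' ⟨hadd, hsmul, hmul, hstar, hres⟩
    funext b
    refine char b (π'' b) ?_
    intro a ha ξ
    rw [← hres a ha, ← ContinuousLinearMap.mul_apply, ← hmul,
      hres _ (hIideal a ha b).2]
  · -- degenerate case : I = ∅, hence H is trivial
    have hSempty : S = ∅ := by
      ext x
      simp only [hSdef, Set.mem_setOf_eq, Set.mem_empty_iff_false, iff_false]
      rintro ⟨a, ha, -⟩
      exact hIne ⟨a, ha⟩
    have hsub : Subsingleton H := by
      constructor
      intro x y
      have hx : ∀ z : H, z = 0 := by
        intro z
        have hz : z ∈ closure ((Submodule.span ℂ S : Submodule ℂ H) : Set H) := hdenseS z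
        rw [hSempty, Submodule.span_empty] at hz
        have : ((⊥ : Submodule ℂ H) : Set H) = {0} := Submodule.bot_coe
        rw [this, closure_singleton] at hz
        exact hz
      rw [hx x, hx y]
    have hsubL : Subsingleton (H →L[ℂ] H) := by
      constructor
      intro f g'
      ext x
      exact Subsingleton.elim _ _
    refine ⟨fun _ => 0, ⟨?_, ?_, ?_, ?_, ?_⟩, ?_⟩
    · intro a b; exact Subsingleton.elim _ _
    · intro c a; exact Subsingleton.elim _ _
    · intro a b; exact Subsingleton.elim _ _
    · intro a; exact Subsingleton.elim _ _
    · intro a _; exact Subsingleton.elim _ _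
    · intro y _; funext b; exact Subsingleton.elim _ _
end

section
/- Let G be a group, H ≤ G a subgroup, α ∈ G/H a coset, and B = {B_t}_{t∈G} a Fell bundle over G. Fix t₁,…,t_n ∈ α and set M_𝔱(B) := { (M_{ij}) : M_{ij} ∈ B_{t_i⁻¹ t_j} }, with matrix multiplication and *-transpose involution. Then M_𝔱(B) is a C*-algebra, and for any b₁,…,b_n with b_j ∈ B_{t_j}, the matrix M := (b_i* b_j)_{i,j} is a positive element of M_𝔱(B). -/
set_option synthInstance.maxHeartbeats 400000
set_option maxHeartbeats 1600000

private lemma real_est1 {s d e : ℝ} (hs : 0 ≤ s) (hd : 0 < d) (he : 0 < e) :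
    s * |(Real.sqrt (s + d))⁻¹ - (Real.sqrt (s + e))⁻¹| ≤ |Real.sqrt d - Real.sqrt e| := by
  wlog h : d ≤ e generalizing d e
  · rw [abs_sub_comm, abs_sub_comm (Real.sqrt d)]
    exact this he hd (le_of_not_ge h)
  set p := Real.sqrt (s + d) with hpdef
  set q := Real.sqrt (s + e) with hqdef
  set u := Real.sqrt d with hudef
  set v := Real.sqrt e with hvdef
  have hp : 0 < p := Real.sqrt_pos.2 (by linarith)
  have hq : 0 < q := Real.sqrt_pos.2 (by linarith)
  have hu : 0 < u := Real.sqrt_pos.2 hd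
  have hv : 0 < v := Real.sqrt_pos.2 he
  have hp2 : p ^ 2 = s + d := Real.sq_sqrt (by linarith)
  have hq2 : q ^ 2 = s + e := Real.sq_sqrt (by linarith)
  have hu2 : u ^ 2 = d := Real.sq_sqrt hd.le
  have hv2 : v ^ 2 = e := Real.sq_sqrt he.le
  have hpq : p ≤ q := Real.sqrt_le_sqrt (by linarith)
  have huv : u ≤ v := Real.sqrt_le_sqrt h
  have hup : u ≤ p := Real.sqrt_le_sqrt (by linarith)
  have hvq : v ≤ q := Real.sqrt_le_sqrt (by linarith)
  have h1 : q⁻¹ ≤ p⁻¹ := by gcongr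
  rw [abs_of_nonneg (by linarith), abs_of_nonpos (by linarith), neg_sub]
  have e1 : p⁻¹ - q⁻¹ = (q - p) / (p * q) := by
    field_simp
  rw [e1, mul_div_assoc', div_le_iff₀ (by positivity)]
  have h2 : (q - p) * (q + p) = (v - u) * (v + u) := by nlinarith [hp2, hq2, hu2, hv2]
  have hspq : s ≤ p * q := by nlinarith
  have h5 : s * ((v - u) * (v + u)) ≤ (p * q) * ((v - u) * (q + p)) := by
    have h6 : s * (v + u) ≤ (p * q) * (q + p) :=
      mul_le_mul hspq (by linarith) (by positivity) (by positivity)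
    calc s * ((v - u) * (v + u)) = (v - u) * (s * (v + u)) := by ring
      _ ≤ (v - u) * ((p * q) * (q + p)) :=
          mul_le_mul_of_nonneg_left h6 (by linarith)
      _ = (p * q) * ((v - u) * (q + p)) := by ring
  have h4 : (s * (q - p)) * (q + p) ≤ ((v - u) * (p * q)) * (q + p) := by
    calc (s * (q - p)) * (q + p) = s * ((q - p) * (q + p)) := by ring
      _ = s * ((v - u) * (v + u)) := by rw [h2]
      _ ≤ (p * q) * ((v - u) * (q + p)) := h5
      _ = ((v - u) * (p * q)) * (q + p) := by ring
  exact le_of_mul_le_mul_right h4 (by positivity)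

private lemma real_est2 {s e : ℝ} (hs : 0 ≤ s) (he : 0 < e) :
    s * |1 - (Real.sqrt (s + e))⁻¹ * s * (Real.sqrt (s + e))⁻¹| ≤ e := by
  have hse : 0 < s + e := by linarith
  have hx : Real.sqrt (s + e) * Real.sqrt (s + e) = s + e := Real.mul_self_sqrt hse.le
  have hxpos : 0 < Real.sqrt (s + e) := Real.sqrt_pos.2 hse
  have h1 : (Real.sqrt (s + e))⁻¹ * s * (Real.sqrt (s + e))⁻¹ = s / (s + e) := by
    rw [eq_div_iff (ne_of_gt hse)]
    field_simp
    rw [Real.sq_sqrt hse.le]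
  rw [h1]
  have h2 : 1 - s / (s + e) = e / (s + e) := by field_simp; ring
  rw [h2, abs_of_nonneg (by positivity)]
  have h3 : s * (e / (s + e)) = s * e / (s + e) := by ring
  rw [h3, div_le_iff₀ hse]
  nlinarith

open Polynomial in
private lemma aux_cfc_mem {A : Type} [NonUnitalCStarAlgebra A]
    (S : Submodule ℂ A) (hSc : IsClosed (S : Set A))
    (hSm : ∀ x ∈ S, ∀ y ∈ S, x * y ∈ S)
    (a : A) (haS : a ∈ S) (ha : IsSelfAdjoint a)
    (f : ℝ → ℝ) (hf : Continuous f) (hf0 : f 0 = 0) :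
    ∃ y ∈ S, cfc f (a : Unitization ℂ A) = (y : Unitization ℂ A) := by
  have haW : IsSelfAdjoint (a : Unitization ℂ A) := Unitization.isSelfAdjoint_inr.2 ha
  have hsmulmem : ∀ (r : ℝ) (x : A), x ∈ S → r • x ∈ S := by
    intro r x hx
    rw [← algebraMap_smul ℂ r x]
    exact S.smul_mem _ hx
  have hpow : ∀ k : ℕ, ∃ y ∈ S, ((a : Unitization ℂ A)) ^ (k + 1) = (y : Unitization ℂ A) := by
    intro k
    induction k with
    | zero => exact ⟨a, haS, pow_one _⟩
    | succ k ih =>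
      obtain ⟨y, hy, e⟩ := ih
      exact ⟨y * a, hSm _ hy _ haS, by rw [pow_succ, e, Unitization.inr_mul]⟩
  have haev : ∀ p : ℝ[X], ∃ y ∈ S,
      aeval (a : Unitization ℂ A) p
        = algebraMap ℝ (Unitization ℂ A) (p.coeff 0) + (y : Unitization ℂ A) := by
    intro p
    induction p using Polynomial.induction_on with
    | C c => exact ⟨0, S.zero_mem, by simp⟩
    | add p q hp hq =>
      obtain ⟨y₁, hy₁, e₁⟩ := hp
      obtain ⟨y₂, hy₂, e₂⟩ := hq
      refine ⟨y₁ + y₂, S.add_mem hy₁ hy₂, ?_⟩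
      rw [map_add, e₁, e₂, Polynomial.coeff_add, map_add, Unitization.inr_add]
      abel
    | monomial k c _ =>
      obtain ⟨y, hy, e⟩ := hpow k
      refine ⟨c • y, hsmulmem _ _ hy, ?_⟩
      have hc0 : (Polynomial.C c * Polynomial.X ^ (k + 1) : ℝ[X]).coeff 0 = 0 := by
        simp [Polynomial.coeff_C_mul, Polynomial.coeff_X_pow]
      rw [hc0, map_zero, zero_add, map_mul, aeval_C, map_pow, aeval_X, e,
        Unitization.inr_smul, Algebra.smul_def]
  set R : ℝ := ‖(a : Unitization ℂ A)‖ with hR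
  have hRnn : 0 ≤ R := norm_nonneg _
  have hspec : spectrum ℝ (a : Unitization ℂ A) ⊆ Set.Icc (-R) R := by
    intro x hx
    have := spectrum.norm_le_norm_of_mem hx
    rw [Real.norm_eq_abs] at this
    exact abs_le.1 this
  have key : ∀ ε : ℝ, 0 < ε → ∃ y ∈ S,
      ‖cfc f (a : Unitization ℂ A) - (y : Unitization ℂ A)‖ ≤ 2 * ε := by
    intro ε hε
    set φ : C(Set.Icc (-R) R, ℝ) :=
      ⟨fun x => f x, hf.comp continuous_subtype_val⟩ with hφ
    have hmem : φ ∈ (polynomialFunctions (Set.Icc (-R) R)).topologicalClosure := by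
      rw [polynomialFunctions_closure_eq_top]
      trivial
    have hmem' : φ ∈ closure ((polynomialFunctions (Set.Icc (-R) R)) : Set C(Set.Icc (-R) R, ℝ)) := by
      rw [← Subalgebra.topologicalClosure_coe]
      exact hmem
    obtain ⟨g, hg, hdist⟩ := Metric.mem_closure_iff.1 hmem' ε hε
    rw [polynomialFunctions_coe] at hg
    obtain ⟨p, rfl⟩ := hg
    obtain ⟨y, hy, e⟩ := haev p
    refine ⟨y, hy, ?_⟩
    have h0R : (0 : ℝ) ∈ Set.Icc (-R) R := by constructor <;> linarith
    have hclose : ∀ x ∈ spectrum ℝ (a : Unitization ℂ A), ‖f x - p.eval x‖ ≤ ε := by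
      intro x hx
      have hx' := hspec hx
      have := ContinuousMap.dist_apply_le_dist (f := φ)
        (g := Polynomial.toContinuousMapOnAlgHom (Set.Icc (-R) R) p) ⟨x, hx'⟩
      rw [Real.dist_eq] at this
      have hgx : (Polynomial.toContinuousMapOnAlgHom (Set.Icc (-R) R) p)
          (⟨x, hx'⟩ : Set.Icc (-R) R) = p.eval x := rfl
      rw [hgx] at this
      calc ‖f x - p.eval x‖ = |φ ⟨x, hx'⟩ - p.eval x| := rfl
        _ ≤ dist φ (Polynomial.toContinuousMapOnAlgHom (Set.Icc (-R) R) p) := this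
        _ ≤ ε := le_of_lt hdist
    have hcfcsub : ‖cfc f (a : Unitization ℂ A) - cfc (fun x => p.eval x) (a : Unitization ℂ A)‖ ≤ ε := by
      rw [← cfc_sub f (fun x => p.eval x) (a : Unitization ℂ A)]
      exact norm_cfc_le hε.le hclose
    have hpeval : cfc (fun x => p.eval x) (a : Unitization ℂ A)
        = algebraMap ℝ (Unitization ℂ A) (p.coeff 0) + (y : Unitization ℂ A) := by
      rw [← e]
      exact cfc_polynomial p (a : Unitization ℂ A)
    have hc0 : ‖algebraMap ℝ (Unitization ℂ A) (p.coeff 0)‖ ≤ ε := by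
      rw [norm_algebraMap']
      have : |p.eval 0 - f 0| ≤ ε := by
        have := ContinuousMap.dist_apply_le_dist (f := φ)
          (g := Polynomial.toContinuousMapOnAlgHom (Set.Icc (-R) R) p) ⟨0, h0R⟩
        rw [Real.dist_eq] at this
        have hgx : (Polynomial.toContinuousMapOnAlgHom (Set.Icc (-R) R) p)
            (⟨0, h0R⟩ : Set.Icc (-R) R) = p.eval 0 := rfl
        rw [hgx] at this
        rw [abs_sub_comm]
        calc |φ ⟨0, h0R⟩ - p.eval 0| ≤ _ := this
          _ ≤ ε := le_of_lt hdist
      rw [hf0, sub_zero] at this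
      rw [Real.norm_eq_abs, Polynomial.coeff_zero_eq_eval_zero]
      exact this
    calc ‖cfc f (a : Unitization ℂ A) - (y : Unitization ℂ A)‖
        = ‖(cfc f (a : Unitization ℂ A) - cfc (fun x => p.eval x) (a : Unitization ℂ A))
            + algebraMap ℝ (Unitization ℂ A) (p.coeff 0)‖ := by
          rw [hpeval]; congr 1; abel
      _ ≤ ‖cfc f (a : Unitization ℂ A) - cfc (fun x => p.eval x) (a : Unitization ℂ A)‖
            + ‖algebraMap ℝ (Unitization ℂ A) (p.coeff 0)‖ := norm_add_le _ _
      _ ≤ ε + ε := add_le_add hcfcsub hc0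
      _ = 2 * ε := by ring
  have hseq : ∀ m : ℕ, ∃ y ∈ S,
      ‖cfc f (a : Unitization ℂ A) - (y : Unitization ℂ A)‖ ≤ 2 * (1 / (m + 1)) :=
    fun m => key (1 / (m + 1)) (by positivity)
  choose y hyS hy using hseq
  have htend : Filter.Tendsto (fun m => ((y m : A) : Unitization ℂ A)) Filter.atTop
      (nhds (cfc f (a : Unitization ℂ A))) := by
    rw [tendsto_iff_norm_sub_tendsto_zero]
    have hb : Filter.Tendsto (fun m : ℕ => 2 * (1 / ((m : ℝ) + 1))) Filter.atTop (nhds 0) := by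
      have : Filter.Tendsto (fun m : ℕ => 1 / ((m : ℝ) + 1)) Filter.atTop (nhds 0) :=
        tendsto_one_div_add_atTop_nhds_zero_nat
      have h2 := this.const_mul 2
      rwa [mul_zero] at h2
    refine squeeze_zero (fun m => norm_nonneg _) (fun m => ?_) hb
    rw [norm_sub_rev]
    exact hy m
  have hcauchy : CauchySeq (fun m => y m) := by
    have h1 : CauchySeq (fun m => ((y m : A) : Unitization ℂ A)) := htend.cauchySeq
    rw [Metric.cauchySeq_iff] at h1 ⊢
    intro ε hε
    obtain ⟨N, hN⟩ := h1 ε hε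
    exact ⟨N, fun m hm k hk => by
      have := hN m hm k hk
      rwa [dist_eq_norm, ← Unitization.inr_sub ℂ, Unitization.norm_inr, ← dist_eq_norm] at this⟩
  obtain ⟨L, hL⟩ := cauchySeq_tendsto_of_complete hcauchy
  have hLS : L ∈ S := hSc.mem_of_tendsto hL (Filter.Eventually.of_forall hyS)
  refine ⟨L, hLS, ?_⟩
  have : Filter.Tendsto (fun m => ((y m : A) : Unitization ℂ A)) Filter.atTop
      (nhds ((L : A) : Unitization ℂ A)) :=
    (Unitization.isometry_inr (𝕜 := ℂ) (A := A)).continuous.continuousAt.tendsto.comp hL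
  exact tendsto_nhds_unique htend this

private lemma aux_sandwich {A : Type} [NonUnitalCStarAlgebra A]
    [PartialOrder (Unitization ℂ A)] [StarOrderedRing (Unitization ℂ A)]
    (a x y : Unitization ℂ A) (ha : 0 ≤ a)
    (hx : x * star x ≤ a) (hy : y * star y ≤ a)
    (f : ℝ → ℝ) (hf : Continuous f) (K : ℝ) (hK : 0 ≤ K)
    (hfK : ∀ s ∈ spectrum ℝ a, s * |f s| ≤ K) :
    ‖star x * cfc f a * y‖ ≤ 2 * K := by
  have hasa : IsSelfAdjoint a := .of_nonneg ha
  have hspos : ∀ s ∈ spectrum ℝ a, 0 ≤ s := fun s hs => spectrum_nonneg_of_nonneg ha hs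
  have bound : ∀ g : ℝ → ℝ, Continuous g → (∀ u, 0 ≤ g u) →
      (∀ s ∈ spectrum ℝ a, s * g s ≤ K) →
      ∀ z : Unitization ℂ A, z * star z ≤ a →
        ‖cfc (fun u => Real.sqrt (g u)) a * z‖ ≤ Real.sqrt K := by
    intro g hg hg0 hgK z hz
    set s := cfc (fun u => Real.sqrt (g u)) a with hsdef
    have hssa : IsSelfAdjoint s := cfc_predicate _ a
    have hcont : Continuous fun u => Real.sqrt (g u) := Real.continuous_sqrt.comp hg
    have h1 : ‖s * z‖ * ‖s * z‖ = ‖(s * z) * star (s * z)‖ :=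
      CStarRing.norm_self_mul_star.symm
    have h2 : (s * z) * star (s * z) = star s * (z * star z) * s := by
      rw [star_mul, hssa.star_eq]
      noncomm_ring
    have h3 : star s * (z * star z) * s ≤ star s * a * s := star_left_conjugate_le_conjugate hz s
    have h4 : (0 : Unitization ℂ A) ≤ star s * (z * star z) * s :=
      star_left_conjugate_nonneg (mul_star_self_nonneg z) s
    have h5 : ‖star s * (z * star z) * s‖ ≤ ‖star s * a * s‖ :=
      CStarAlgebra.norm_le_norm_of_nonneg_of_le h4 h3
    have hcgi : Continuous fun u => Real.sqrt (g u) * u := hcont.mul continuous_id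
    have h6 : star s * a * s = cfc (fun u => Real.sqrt (g u) * u * Real.sqrt (g u)) a := by
      rw [hssa.star_eq]
      symm
      calc cfc (fun u => Real.sqrt (g u) * u * Real.sqrt (g u)) a
          = cfc (fun u => Real.sqrt (g u) * u) a * cfc (fun u => Real.sqrt (g u)) a :=
            cfc_mul _ _ a hcgi.continuousOn hcont.continuousOn
        _ = (cfc (fun u => Real.sqrt (g u)) a * cfc (fun u => u) a)
              * cfc (fun u => Real.sqrt (g u)) a := by
            rw [cfc_mul (fun u => Real.sqrt (g u)) (fun u : ℝ => u) a hcont.continuousOn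
              (continuous_id.continuousOn)]
        _ = s * a * s := by rw [cfc_id' ℝ a hasa, hsdef]
    have h7 : ‖cfc (fun u => Real.sqrt (g u) * u * Real.sqrt (g u)) a‖ ≤ K := by
      refine norm_cfc_le hK fun u hu => ?_
      have hu0 := hspos u hu
      have : Real.sqrt (g u) * u * Real.sqrt (g u) = u * g u := by
        rw [mul_comm (Real.sqrt (g u)) u, mul_assoc, Real.mul_self_sqrt (hg0 u)]
      rw [Real.norm_eq_abs, this, abs_of_nonneg (mul_nonneg hu0 (hg0 u))]
      exact hgK u hu
    have h8 : ‖s * z‖ * ‖s * z‖ ≤ K := by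
      rw [h1, h2]
      refine h5.trans ?_
      rw [h6]
      exact h7
    rw [show ‖s * z‖ * ‖s * z‖ = ‖s * z‖ ^ 2 by ring] at h8
    exact (Real.le_sqrt (norm_nonneg _) hK).2 h8
  set fp : ℝ → ℝ := fun u => max (f u) 0 with hfp
  set fm : ℝ → ℝ := fun u => max (-f u) 0 with hfm
  have hfpc : Continuous fp := hf.max continuous_const
  have hfmc : Continuous fm := hf.neg.max continuous_const
  have hfp0 : ∀ u, 0 ≤ fp u := fun u => le_max_right _ _
  have hfm0 : ∀ u, 0 ≤ fm u := fun u => le_max_right _ _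
  have hfpK : ∀ s ∈ spectrum ℝ a, s * fp s ≤ K := by
    intro s hs
    refine le_trans ?_ (hfK s hs)
    have : fp s ≤ |f s| := by
      rcases le_total (f s) 0 with h | h
      · simp only [hfp]; rw [max_eq_right h, abs_of_nonpos h]; linarith
      · simp only [hfp]; rw [max_eq_left h, abs_of_nonneg h]
    exact mul_le_mul_of_nonneg_left this (hspos s hs)
  have hfmK : ∀ s ∈ spectrum ℝ a, s * fm s ≤ K := by
    intro s hs
    refine le_trans ?_ (hfK s hs)
    have : fm s ≤ |f s| := by
      rcases le_total (f s) 0 with h | h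
      · simp only [hfm]; rw [max_eq_left (by linarith), abs_of_nonpos h]
      · simp only [hfm]; rw [max_eq_right (by linarith), abs_of_nonneg h]; exact h
    exact mul_le_mul_of_nonneg_left this (hspos s hs)
  have hsplit : cfc f a = cfc fp a - cfc fm a := by
    rw [← cfc_sub fp fm a hfpc.continuousOn hfmc.continuousOn]
    refine cfc_congr fun u _ => ?_
    simp only [hfp, hfm]
    rcases le_total (f u) 0 with h | h
    · rw [max_eq_right h, max_eq_left (by linarith)]; ring
    · rw [max_eq_left h, max_eq_right (by linarith)]; ring
  have hsq : ∀ (g : ℝ → ℝ), Continuous g → (∀ u, 0 ≤ g u) →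
      cfc g a = cfc (fun u => Real.sqrt (g u)) a * cfc (fun u => Real.sqrt (g u)) a := by
    intro g hg hg0
    have hcg : Continuous fun u => Real.sqrt (g u) := Real.continuous_sqrt.comp hg
    rw [← cfc_mul _ _ a hcg.continuousOn hcg.continuousOn]
    exact cfc_congr fun u _ => (Real.mul_self_sqrt (hg0 u)).symm
  have hterm : ∀ g : ℝ → ℝ, Continuous g → (∀ u, 0 ≤ g u) →
      (∀ s ∈ spectrum ℝ a, s * g s ≤ K) → ‖star x * cfc g a * y‖ ≤ K := by
    intro g hg hg0 hgK
    set s := cfc (fun u => Real.sqrt (g u)) a with hsdef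
    have hssa : IsSelfAdjoint s := cfc_predicate _ a
    have e1 : star x * cfc g a * y = star (s * x) * (s * y) := by
      rw [hsq g hg hg0, star_mul, hssa.star_eq]
      noncomm_ring
    rw [e1]
    calc ‖star (s * x) * (s * y)‖ ≤ ‖star (s * x)‖ * ‖s * y‖ := norm_mul_le _ _
      _ = ‖s * x‖ * ‖s * y‖ := by rw [norm_star]
      _ ≤ Real.sqrt K * Real.sqrt K :=
          mul_le_mul (bound g hg hg0 hgK x hx) (bound g hg hg0 hgK y hy)
            (norm_nonneg _) (Real.sqrt_nonneg _)
      _ = K := Real.mul_self_sqrt hK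
  calc ‖star x * cfc f a * y‖
      = ‖star x * cfc fp a * y - star x * cfc fm a * y‖ := by
        rw [hsplit]; congr 1; noncomm_ring
    _ ≤ ‖star x * cfc fp a * y‖ + ‖star x * cfc fm a * y‖ := norm_sub_le _ _
    _ ≤ K + K := add_le_add (hterm fp hfpc hfp0 hfpK) (hterm fm hfmc hfm0 hfmK)
    _ = 2 * K := by ring



/-- Let `B` be a Fell bundle over `G` (realized as a grading of a
C*-algebra `A`), `H ≤ G`, and `t₁, …, t_n` elements of a single left coset `α` of `H`.
The matrix space `M_𝔱(B) = {(M_{ij}) : M_{ij} ∈ B_{t_i⁻¹ t_j}}` is a *-subalgebra of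
`Matrix (Fin n) (Fin n) A` (closed under multiplication and *-transpose, i.e. a
C*-algebra), and for `b_j ∈ B_{t_j}` the matrix `M = (b_i* b_j)` belongs to it and is
positive: `M = N* N` for some self-adjoint `N` in `M_𝔱(B)`. -/
theorem fell_matrix_algebra_positive
    {G : Type} [Group G]
    {A : Type} [NonUnitalNormedRing A] [StarRing A] [CStarRing A] [CompleteSpace A]
    [NormedSpace ℂ A] [IsScalarTower ℂ A A] [SMulCommClass ℂ A A] [StarModule ℂ A]
    (Bfib : G → Submodule ℂ A)
    (hclosed : ∀ t, IsClosed (Bfib t : Set A))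
    (hmul : ∀ {s t : G} {a b : A}, a ∈ Bfib s → b ∈ Bfib t → a * b ∈ Bfib (s * t))
    (hstar : ∀ {t : G} {a : A}, a ∈ Bfib t → star a ∈ Bfib t⁻¹)
    (H : Subgroup G) (n : ℕ) (t : Fin n → G)
    (hcoset : ∀ i j : Fin n, (t i)⁻¹ * t j ∈ H)
    (b : Fin n → A) (hb : ∀ i, b i ∈ Bfib (t i)) :
    (∀ M : Matrix (Fin n) (Fin n) A, (∀ i j, M i j ∈ Bfib ((t i)⁻¹ * t j)) →
      ∀ N : Matrix (Fin n) (Fin n) A, (∀ i j, N i j ∈ Bfib ((t i)⁻¹ * t j)) →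
        ∀ i j, (M * N) i j ∈ Bfib ((t i)⁻¹ * t j)) ∧
    (∀ M : Matrix (Fin n) (Fin n) A, (∀ i j, M i j ∈ Bfib ((t i)⁻¹ * t j)) →
        ∀ i j, M.conjTranspose i j ∈ Bfib ((t i)⁻¹ * t j)) ∧
    (∀ i j, star (b i) * b j ∈ Bfib ((t i)⁻¹ * t j)) ∧
    (∃ N : Matrix (Fin n) (Fin n) A,
        (∀ i j, N i j ∈ Bfib ((t i)⁻¹ * t j)) ∧
        N.conjTranspose = N ∧
        Matrix.of (fun i j => star (b i) * b j) = N.conjTranspose * N) := by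
  refine ⟨?_, ?_, ?_, ?_⟩
  · -- closed under multiplication
    intro M hM N hN i j
    rw [Matrix.mul_apply]
    apply Submodule.sum_mem
    intro k _
    have h1 := hmul (hM i k) (hN k j)
    have e : ((t i)⁻¹ * t k) * ((t k)⁻¹ * t j) = (t i)⁻¹ * t j := by group
    rwa [e] at h1
  · -- closed under conjTranspose
    intro M hM i j
    rw [Matrix.conjTranspose_apply]
    have h1 := hstar (hM j i)
    have e : ((t j)⁻¹ * t i)⁻¹ = (t i)⁻¹ * t j := by group
    rwa [e] at h1
  · -- entries of M are in the right fibers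
    intro i j
    exact hmul (hstar (hb i)) (hb j)
  · -- positivity
    letI : NonUnitalCStarAlgebra A := { }
    letI : PartialOrder (Unitization ℂ A) := CStarAlgebra.spectralOrder _
    letI : StarOrderedRing (Unitization ℂ A) := CStarAlgebra.spectralOrderedRing _
    set a : A := ∑ k : Fin n, b k * star (b k) with hadef
    have haBf : a ∈ Bfib 1 := by
      apply Submodule.sum_mem
      intro k _
      have := hmul (hb k) (hstar (hb k))
      rwa [mul_inv_cancel] at this
    have hasa : IsSelfAdjoint a := by
      rw [IsSelfAdjoint, hadef, star_sum]
      exact Finset.sum_congr rfl fun k _ => by rw [star_mul, star_star]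
    have haWsa : IsSelfAdjoint ((a : A) : Unitization ℂ A) := Unitization.isSelfAdjoint_inr.2 hasa
    have hinr_sum : ∀ (g : Fin n → A),
        ((∑ k : Fin n, g k : A) : Unitization ℂ A) = ∑ k : Fin n, ((g k : A) : Unitization ℂ A) :=
      fun g => map_sum (Unitization.inrNonUnitalStarAlgHom ℂ A) g Finset.univ
    have haWsum : ((a : A) : Unitization ℂ A)
        = ∑ k : Fin n, ((b k : A) : Unitization ℂ A) * star ((b k : A) : Unitization ℂ A) := by
      rw [hadef, hinr_sum]
      exact Finset.sum_congr rfl fun k _ => by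
        rw [Unitization.inr_mul, Unitization.inr_star]
    have haW : (0 : Unitization ℂ A) ≤ ((a : A) : Unitization ℂ A) := by
      rw [haWsum]
      exact Finset.sum_nonneg fun k _ => mul_star_self_nonneg _
    have hb2 : ∀ j, ((b j : A) : Unitization ℂ A) * star ((b j : A) : Unitization ℂ A)
        ≤ ((a : A) : Unitization ℂ A) := by
      intro j
      rw [haWsum]
      exact Finset.single_le_sum (f := fun k : Fin n =>
        ((b k : A) : Unitization ℂ A) * star ((b k : A) : Unitization ℂ A))
        (fun k _ => mul_star_self_nonneg _) (Finset.mem_univ j)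
    -- the approximating functions
    set ε : ℕ → ℝ := fun m => 1 / (m + 1) with hεdef
    have hεpos : ∀ m, 0 < ε m := fun m => by positivity
    set F : ℝ → ℝ → ℝ := fun e u => (Real.sqrt (|u| + e))⁻¹ with hFdef
    have hFc : ∀ e : ℝ, 0 < e → Continuous (F e) := by
      intro e he
      apply Continuous.inv₀
      · exact Real.continuous_sqrt.comp (continuous_abs.add continuous_const)
      · intro u
        exact ne_of_gt (Real.sqrt_pos.2 (by positivity))
    have hF0 : ∀ e s : ℝ, 0 ≤ s → F e s = (Real.sqrt (s + e))⁻¹ := by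
      intro e s hs
      simp only [hFdef, abs_of_nonneg hs]
    -- the middle elements and their components in A
    have hSm : ∀ x ∈ Bfib 1, ∀ y ∈ Bfib 1, x * y ∈ Bfib (1 : G) := by
      intro x hx y hy
      have := hmul hx hy
      rwa [one_mul] at this
    have hmemy : ∀ m : ℕ, ∃ y ∈ Bfib 1,
        cfc (fun u => F (ε m) u - F (ε m) 0) ((a : A) : Unitization ℂ A)
          = (y : Unitization ℂ A) :=
      fun m => aux_cfc_mem (Bfib 1) (hclosed 1) hSm a haBf hasa _
        ((hFc _ (hεpos m)).sub continuous_const) (by ring)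
    choose y hyBf hy using hmemy
    have hcm : ∀ m : ℕ, cfc (F (ε m)) ((a : A) : Unitization ℂ A)
        = algebraMap ℝ (Unitization ℂ A) (F (ε m) 0) + ((y m : A) : Unitization ℂ A) := by
      intro m
      have h1 : cfc (F (ε m)) ((a : A) : Unitization ℂ A)
          = cfc (fun u => (F (ε m) 0) + (F (ε m) u - F (ε m) 0)) ((a : A) : Unitization ℂ A) :=
        cfc_congr fun u _ => by ring
      rw [h1, cfc_add ((a : A) : Unitization ℂ A) (fun _ => F (ε m) 0) (fun u => F (ε m) u - F (ε m) 0) continuousOn_const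
          (((hFc _ (hεpos m)).sub continuous_const).continuousOn),
        cfc_const _ _ haWsa, hy m]
    have hysa : ∀ m, star (y m) = y m := by
      intro m
      have h1 : IsSelfAdjoint (cfc (fun u => F (ε m) u - F (ε m) 0)
          ((a : A) : Unitization ℂ A)) := cfc_predicate _ _
      apply Unitization.inr_injective (R := ℂ)
      rw [Unitization.inr_star, ← hy m, h1.star_eq, hy m]
    -- the approximating matrices
    set z : ℕ → Fin n → Fin n → A := fun m i j =>
      (F (ε m) 0) • (star (b i) * b j) + star (b i) * y m * b j with hzdef
    have hzmem : ∀ m i j, z m i j ∈ Bfib ((t i)⁻¹ * t j) := by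
      intro m i j
      apply Submodule.add_mem
      · rw [← algebraMap_smul ℂ (F (ε m) 0)]
        exact Submodule.smul_mem _ _ (hmul (hstar (hb i)) (hb j))
      · have h1 := hmul (hmul (hstar (hb i)) (hyBf m)) (hb j)
        rwa [mul_one] at h1
    have hzsa : ∀ m i j, star (z m i j) = z m j i := by
      intro m i j
      simp only [hzdef, star_add, star_smul, star_mul, star_star, star_trivial, hysa m]
      rw [mul_assoc]
    have hE : ∀ m i j, ((z m i j : A) : Unitization ℂ A)
        = star ((b i : A) : Unitization ℂ A) * cfc (F (ε m)) ((a : A) : Unitization ℂ A)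
          * ((b j : A) : Unitization ℂ A) := by
      intro m i j
      rw [hcm m]
      simp only [hzdef, Unitization.inr_add, Unitization.inr_smul, Unitization.inr_mul,
        Unitization.inr_star]
      rw [mul_add, add_mul]
      congr 1
      rw [← Algebra.commutes (F (ε m) 0) (star ((b i : A) : Unitization ℂ A)),
        ← Algebra.smul_def, smul_mul_assoc]
    -- the Cauchy estimate
    have hcest : ∀ m k i j, ‖z m i j - z k i j‖
        ≤ 2 * |Real.sqrt (ε m) - Real.sqrt (ε k)| := by
      intro m k i j
      rw [← Unitization.norm_inr (𝕜 := ℂ), Unitization.inr_sub ℂ, hE, hE]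
      have e1 : star ((b i : A) : Unitization ℂ A) * cfc (F (ε m)) ((a : A) : Unitization ℂ A)
            * ((b j : A) : Unitization ℂ A)
          - star ((b i : A) : Unitization ℂ A) * cfc (F (ε k)) ((a : A) : Unitization ℂ A)
            * ((b j : A) : Unitization ℂ A)
          = star ((b i : A) : Unitization ℂ A)
            * (cfc (F (ε m)) ((a : A) : Unitization ℂ A)
              - cfc (F (ε k)) ((a : A) : Unitization ℂ A))
            * ((b j : A) : Unitization ℂ A) := by noncomm_ring
      rw [e1, ← cfc_sub _ _ _ ((hFc _ (hεpos m)).continuousOn) ((hFc _ (hεpos k)).continuousOn)]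
      refine aux_sandwich _ _ _ haW (hb2 i) (hb2 j) _
        ((hFc _ (hεpos m)).sub (hFc _ (hεpos k))) _ (abs_nonneg _) ?_
      intro s hs
      have hs0 : 0 ≤ s := spectrum_nonneg_of_nonneg haW hs
      simp only [Pi.sub_apply]
      rw [hF0 _ _ hs0, hF0 _ _ hs0]
      exact real_est1 hs0 (hεpos m) (hεpos k)
    -- the product estimate
    have hprod : ∀ m i j, ‖star (b i) * b j - ∑ k : Fin n, z m i k * z m k j‖ ≤ 2 * ε m := by
      intro m i j
      rw [← Unitization.norm_inr (𝕜 := ℂ), Unitization.inr_sub ℂ]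
      have hsum : ((∑ k : Fin n, z m i k * z m k j : A) : Unitization ℂ A)
          = star ((b i : A) : Unitization ℂ A)
            * (cfc (F (ε m)) ((a : A) : Unitization ℂ A) * ((a : A) : Unitization ℂ A)
              * cfc (F (ε m)) ((a : A) : Unitization ℂ A))
            * ((b j : A) : Unitization ℂ A) := by
        rw [hinr_sum]
        calc ∑ k : Fin n, ((z m i k * z m k j : A) : Unitization ℂ A)
            = ∑ k : Fin n,
              ((star ((b i : A) : Unitization ℂ A) * cfc (F (ε m)) ((a : A) : Unitization ℂ A))
                * (((b k : A) : Unitization ℂ A) * star ((b k : A) : Unitization ℂ A))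
                * (cfc (F (ε m)) ((a : A) : Unitization ℂ A) * ((b j : A) : Unitization ℂ A))) :=
              Finset.sum_congr rfl fun k _ => by
                rw [Unitization.inr_mul, hE, hE]; noncomm_ring
          _ = (star ((b i : A) : Unitization ℂ A) * cfc (F (ε m)) ((a : A) : Unitization ℂ A))
                * (∑ k : Fin n, ((b k : A) : Unitization ℂ A) * star ((b k : A) : Unitization ℂ A))
                * (cfc (F (ε m)) ((a : A) : Unitization ℂ A) * ((b j : A) : Unitization ℂ A)) := by
              rw [← Finset.sum_mul, ← Finset.mul_sum]
          _ = _ := by rw [← haWsum]; noncomm_ring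
      rw [hsum]
      have hmid : cfc (F (ε m)) ((a : A) : Unitization ℂ A) * ((a : A) : Unitization ℂ A)
            * cfc (F (ε m)) ((a : A) : Unitization ℂ A)
          = cfc (fun u => F (ε m) u * u * F (ε m) u) ((a : A) : Unitization ℂ A) := by
        symm
        calc cfc (fun u => F (ε m) u * u * F (ε m) u) ((a : A) : Unitization ℂ A)
            = cfc (fun u => F (ε m) u * u) ((a : A) : Unitization ℂ A)
              * cfc (F (ε m)) ((a : A) : Unitization ℂ A) :=
              cfc_mul _ _ _ ((hFc _ (hεpos m)).mul continuous_id).continuousOn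
                (hFc _ (hεpos m)).continuousOn
          _ = (cfc (F (ε m)) ((a : A) : Unitization ℂ A)
                * cfc (fun u : ℝ => u) ((a : A) : Unitization ℂ A))
              * cfc (F (ε m)) ((a : A) : Unitization ℂ A) := by
              rw [cfc_mul (F (ε m)) (fun u : ℝ => u) _ (hFc _ (hεpos m)).continuousOn
                continuous_id.continuousOn]
          _ = _ := by rw [cfc_id' ℝ _ haWsa]
      have hone : ((star (b i) * b j : A) : Unitization ℂ A)
          = star ((b i : A) : Unitization ℂ A)
            * cfc (fun _ : ℝ => (1 : ℝ)) ((a : A) : Unitization ℂ A)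
            * ((b j : A) : Unitization ℂ A) := by
        rw [cfc_const _ _ haWsa, map_one, Unitization.inr_mul, Unitization.inr_star, mul_one]
      rw [hmid, hone]
      have e2 : star ((b i : A) : Unitization ℂ A)
            * cfc (fun _ : ℝ => (1 : ℝ)) ((a : A) : Unitization ℂ A)
            * ((b j : A) : Unitization ℂ A)
          - star ((b i : A) : Unitization ℂ A)
            * cfc (fun u => F (ε m) u * u * F (ε m) u) ((a : A) : Unitization ℂ A)
            * ((b j : A) : Unitization ℂ A)
          = star ((b i : A) : Unitization ℂ A)
            * (cfc (fun _ : ℝ => (1 : ℝ)) ((a : A) : Unitization ℂ A)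
              - cfc (fun u => F (ε m) u * u * F (ε m) u) ((a : A) : Unitization ℂ A))
            * ((b j : A) : Unitization ℂ A) := by noncomm_ring
      have hcont3 : Continuous fun u : ℝ => F (ε m) u * u * F (ε m) u :=
        ((hFc _ (hεpos m)).mul continuous_id).mul (hFc _ (hεpos m))
      rw [e2, ← cfc_sub (fun _ : ℝ => (1 : ℝ)) (fun u => F (ε m) u * u * F (ε m) u) _
        continuousOn_const hcont3.continuousOn]
      refine aux_sandwich _ _ _ haW (hb2 i) (hb2 j) _
        (continuous_const.sub hcont3) _ (hεpos m).le ?_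
      intro s hs
      have hs0 : 0 ≤ s := spectrum_nonneg_of_nonneg haW hs
      simp only [Pi.sub_apply]
      rw [hF0 _ _ hs0]
      exact real_est2 hs0 (hεpos m)
    -- the sequences converge
    have hsqrt0 : Filter.Tendsto (fun m : ℕ => Real.sqrt (ε m)) Filter.atTop (nhds 0) := by
      have h1 : Filter.Tendsto (fun m : ℕ => ε m) Filter.atTop (nhds 0) := by
        exact tendsto_one_div_add_atTop_nhds_zero_nat
      have := (Real.continuous_sqrt.tendsto 0).comp h1
      rwa [Real.sqrt_zero] at this
    have hεanti : ∀ m k : ℕ, m ≤ k → ε k ≤ ε m := by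
      intro m k hmk
      have hmk' : (m : ℝ) ≤ (k : ℝ) := Nat.cast_le.2 hmk
      apply div_le_div_of_nonneg_left zero_le_one (by positivity) (by linarith)
    have hzc : ∀ i j, CauchySeq (fun m => z m i j) := by
      intro i j
      apply cauchySeq_of_le_tendsto_0 (fun N => 2 * Real.sqrt (ε N))
      · intro m k N hm hk
        rw [dist_eq_norm]
        refine (hcest m k i j).trans ?_
        have h1 : Real.sqrt (ε m) ≤ Real.sqrt (ε N) := Real.sqrt_le_sqrt (hεanti N m hm)
        have h2 : Real.sqrt (ε k) ≤ Real.sqrt (ε N) := Real.sqrt_le_sqrt (hεanti N k hk)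
        have h3 : |Real.sqrt (ε m) - Real.sqrt (ε k)| ≤ Real.sqrt (ε N) := by
          rw [abs_sub_le_iff]
          constructor <;> nlinarith [Real.sqrt_nonneg (ε m), Real.sqrt_nonneg (ε k)]
        linarith
      · simpa using hsqrt0.const_mul 2
    have hlim : ∀ i j, ∃ L : A, Filter.Tendsto (fun m => z m i j) Filter.atTop (nhds L) :=
      fun i j => cauchySeq_tendsto_of_complete (hzc i j)
    choose L hL using hlim
    -- the limit matrix
    refine ⟨Matrix.of fun i j => L i j, ?_, ?_, ?_⟩
    · intro i j
      exact (hclosed _).mem_of_tendsto (hL i j)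
        (Filter.Eventually.of_forall fun m => hzmem m i j)
    · ext i j
      rw [Matrix.conjTranspose_apply, Matrix.of_apply, Matrix.of_apply]
      have h1 : Filter.Tendsto (fun m => star (z m j i)) Filter.atTop (nhds (star (L j i))) :=
        (continuous_star.tendsto _).comp (hL j i)
      have h2 : Filter.Tendsto (fun m => star (z m j i)) Filter.atTop (nhds (L i j)) := by
        simp only [fun m => hzsa m j i]
        exact hL i j
      exact tendsto_nhds_unique h1 h2
    · have hct : (Matrix.of fun i j => L i j).conjTranspose = Matrix.of fun i j => L i j := by
        ext i j
        rw [Matrix.conjTranspose_apply, Matrix.of_apply, Matrix.of_apply]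
        have h1 : Filter.Tendsto (fun m => star (z m j i)) Filter.atTop (nhds (star (L j i))) :=
          (continuous_star.tendsto _).comp (hL j i)
        have h2 : Filter.Tendsto (fun m => star (z m j i)) Filter.atTop (nhds (L i j)) := by
          simp only [fun m => hzsa m j i]
          exact hL i j
        exact tendsto_nhds_unique h1 h2
      rw [hct]
      ext i j
      rw [Matrix.of_apply, Matrix.mul_apply]
      have h1 : Filter.Tendsto (fun m => ∑ k : Fin n, z m i k * z m k j) Filter.atTop
          (nhds (∑ k : Fin n, L i k * L k j)) :=
        tendsto_finset_sum _ fun k _ => (hL i k).mul (hL k j)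
      have h2 : Filter.Tendsto (fun m => ∑ k : Fin n, z m i k * z m k j) Filter.atTop
          (nhds (star (b i) * b j)) := by
        rw [tendsto_iff_norm_sub_tendsto_zero]
        have hbnd : Filter.Tendsto (fun m : ℕ => 2 * ε m) Filter.atTop (nhds 0) := by
          have h1' : Filter.Tendsto (fun m : ℕ => ε m) Filter.atTop (nhds 0) := by
            exact tendsto_one_div_add_atTop_nhds_zero_nat
          simpa using h1'.const_mul 2
        refine squeeze_zero (fun m => norm_nonneg _) (fun m => ?_) hbnd
        rw [norm_sub_rev]
        exact hprod m i j
      exact tendsto_nhds_unique h2 h1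
end

section
/- There exists a Banach *-algebraic bundle B over Z/2Z whose unit fiber is the C*-algebra ℂ and whose norm satisfies ‖b*b‖ = ‖b‖² for all b, but whose only C*-completion is the zero bundle. Concretely: take B = ℂ × Z/2 with involution (λ,r)* = (conj λ, r) and product (λ,r)(μ,s) = (λμ, r+s) unless r = s = 1, in which case (λ,1)(μ,1) = (−λμ, 0). Then for any C*-completion ρ : B → C, both fibers of C are zero. -/
namespace Stmt9

private lemma aux {D : Type*} [NonUnitalCStarAlgebra D] (e x : D) (he : star e = e)
    (hee : e * e = e) (hx : star x = x) (hxx : x * x = -e) : e = 0 ∧ x = 0 := by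
  have hE : (e : Unitization ℂ D) = 0 := by
    have hsaE : IsSelfAdjoint (e : Unitization ℂ D) := by
      rw [isSelfAdjoint_iff, ← Unitization.inr_star, he]
    have h1 : SpectrumRestricts (↑e : Unitization ℂ D) ContinuousMap.realToNNReal := by
      rw [SpectrumRestricts.nnreal_iff]
      have key : star (x * x) * (x * x) = e := by
        rw [star_mul, hx, hxx, neg_mul_neg, hee]
      have : (↑e : Unitization ℂ D) = star (↑(x * x) : Unitization ℂ D) * ↑(x * x) := by
        rw [← Unitization.inr_star, ← Unitization.inr_mul, key]
      rw [this]
      exact spectrum_star_mul_self_nonneg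
    have h2 : SpectrumRestricts (-(↑e : Unitization ℂ D)) ContinuousMap.realToNNReal := by
      rw [SpectrumRestricts.nnreal_iff]
      have : -(↑e : Unitization ℂ D) = star (↑x : Unitization ℂ D) * ↑x := by
        rw [← Unitization.inr_star, ← Unitization.inr_mul, hx, hxx, Unitization.inr_neg]
      rw [this]
      exact spectrum_star_mul_self_nonneg
    exact SpectrumRestricts.eq_zero_of_neg hsaE h1 h2
  have he0 : e = 0 := by
    have := Unitization.inr_injective (R := ℂ) (hE.trans (Unitization.inr_zero ℂ).symm)
    exact this
  refine ⟨he0, ?_⟩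
  have : star x * x = 0 := by rw [hx, hxx, he0, neg_zero]
  exact (CStarRing.star_mul_self_eq_zero_iff x).mp this


/-- The product of the Banach *-algebraic bundle `B = ℂ × ℤ/2`:
`(λ,r)(μ,s) = (λμ, r+s)` unless `r = s = 1`, in which case `(λ,1)(μ,1) = (−λμ, 0)`. -/
noncomputable def bmul (a b : ℂ × ZMod 2) : ℂ × ZMod 2 :=
  if a.2 = 1 ∧ b.2 = 1 then (-(a.1 * b.1), 0) else (a.1 * b.1, a.2 + b.2)

/-- The involution `(λ,r)* = (conj λ, r)`. -/
def bstar (a : ℂ × ZMod 2) : ℂ × ZMod 2 := ((starRingEnd ℂ) a.1, a.2)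

/-- The norm of the bundle: `‖(λ,r)‖ = |λ|`. -/
noncomputable def bnorm (a : ℂ × ZMod 2) : ℝ := ‖a.1‖

/-- The bundle `B = ℂ × ℤ/2` above satisfies the C*-norm identity
`‖b* b‖ = ‖b‖²`, yet its only C*-completion is the zero bundle: for any Fell bundle
`{C_r}_{r ∈ ℤ/2}` over `ℤ/2` (realized as a grading `fibC` of a C*-algebra `D` by
closed subspaces) and any morphism `ρ` of Banach *-algebraic bundles from `B` with
fiberwise dense range, both fibers `C_0` and `C_1` are zero. -/
theorem only_zero_cstar_completion :
    (∀ a : ℂ × ZMod 2, bnorm (bmul (bstar a) a) = bnorm a ^ 2) ∧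
    (∀ (D : Type) [NonUnitalNormedRing D] [StarRing D] [CStarRing D] [CompleteSpace D]
        [NormedSpace ℂ D] [IsScalarTower ℂ D D] [SMulCommClass ℂ D D] [StarModule ℂ D]
        (fibC : ZMod 2 → Submodule ℂ D),
        (∀ r, IsClosed (fibC r : Set D)) →
        (∀ r s : ZMod 2, ∀ x ∈ fibC r, ∀ y ∈ fibC s, x * y ∈ fibC (r + s)) →
        (∀ r : ZMod 2, ∀ x ∈ fibC r, star x ∈ fibC (-r)) →
        ∀ ρ : ZMod 2 → ℂ → D,
          (∀ r, IsLinearMap ℂ (ρ r)) →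
          (∀ (r : ZMod 2) (l : ℂ), ρ r l ∈ fibC r) →
          (∀ r, closure (Set.range (ρ r)) = (fibC r : Set D)) →
          (∃ M : ℝ, ∀ a : ℂ × ZMod 2, ‖ρ a.2 a.1‖ ≤ M * bnorm a) →
          (∀ a b : ℂ × ZMod 2, ρ (bmul a b).2 (bmul a b).1 = ρ a.2 a.1 * ρ b.2 b.1) →
          (∀ a : ℂ × ZMod 2, ρ (bstar a).2 (bstar a).1 = star (ρ a.2 a.1)) →
          fibC 0 = ⊥ ∧ fibC 1 = ⊥) := by
  constructor
  · intro a
    simp only [bmul, bstar, bnorm]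
    split_ifs with h
    · simp only [and_self] at h; simp [h, norm_mul, RCLike.norm_conj, sq]
    · simp only [and_self] at h; simp [h, norm_mul, RCLike.norm_conj, sq]
  · intro D _ _ _ _ _ _ _ _ fibC _hclosed _hmulmem _hstarmem ρ hlin _hmem hdense _hbdd hmul hstar
    letI : NonUnitalCStarAlgebra D := {}
    -- basic algebraic relations for e = ρ 0 1 and x = ρ 1 1
    set e : D := ρ 0 1 with he_def
    set x : D := ρ 1 1 with hx_def
    have h00 := hmul (1, 0) (1, 0)
    have h11 := hmul (1, 1) (1, 1)
    have hs0 := hstar (1, 0)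
    have hs1 := hstar (1, 1)
    simp only [bmul, bstar, map_one] at h00 h11 hs0 hs1
    rw [if_neg (by decide)] at h00
    rw [if_pos (by decide)] at h11
    norm_num at h00 h11 hs0 hs1
    -- h11 : ρ 0 (-1) = x * x ; linearity gives ρ 0 (-1) = -e
    have hneg : ρ 0 (-1 : ℂ) = -e := by
      have := (hlin 0).map_smul (-1 : ℂ) 1
      simpa [he_def] using this
    have hxx : x * x = -e := by rw [← h11, hneg]
    have hee : e * e = e := by rw [← h00]
    have hestar : star e = e := hs0.symm
    have hxstar : star x = x := hs1.symm
    obtain ⟨he0, hx0⟩ := aux e x hestar hee hxstar hxx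
    -- every value of ρ is zero
    have hρ0 : ∀ l : ℂ, ρ 0 l = 0 := by
      intro l
      have := (hlin 0).map_smul l 1
      simp only [smul_eq_mul, mul_one] at this
      rw [this, ← he_def, he0, smul_zero]
    have hρ1 : ∀ l : ℂ, ρ 1 l = 0 := by
      intro l
      have := (hlin 1).map_smul l 1
      simp only [smul_eq_mul, mul_one] at this
      rw [this, ← hx_def, hx0, smul_zero]
    have key : ∀ r : ZMod 2, (∀ l : ℂ, ρ r l = 0) → fibC r = ⊥ := by
      intro r hr
      rw [eq_bot_iff]
      intro y hy
      have hy' : y ∈ closure (Set.range (ρ r)) := by rw [hdense r]; exact hy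
      have hrange : Set.range (ρ r) ⊆ {(0 : D)} := by
        rintro - ⟨l, rfl⟩; simp [hr l]
      have : y ∈ ({(0 : D)} : Set D) :=
        (closure_minimal hrange isClosed_singleton) hy'
      simpa using this
    exact ⟨key 0 hρ0, key 1 hρ1⟩

end Stmt9
end
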